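/- arXiv:2410.07882 — 5 statements merged into one kernel-verified Lean document; each statement's English description precedes it below -/
import Mathlib

section
/- Jacobi's triple product identity (analytic form): for all complex numbers q and z with |q| < 1 and z ≠ 0, the series ∑_{m ∈ ℤ} (-1)^m q^{m(m-1)/2} z^m converges absolutely and equals the (absolutely convergent) infinite product ∏_{n=1}^{∞} (1 - q^n)(1 - q^n z^{-1})(1 - q^{n-1} z). -/
open Finset Filter Complex Topology


def jtpG (q : ℂ) : ℕ → ℕ → ℂ
  | _, 0 => 1
  | 0, _+1 => 0
  | n+1, k+1 => jtpG q n (k+1) + q ^ (n-k) * jtpG q n k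

lemma jtpG_zero (q : ℂ) : ∀ n k, n < k → jtpG q n k = 0
  | 0, _+1, _ => rfl
  | n+1, k+1, h => by
      rw [jtpG, jtpG_zero q n (k+1) (by omega), jtpG_zero q n k (by omega)]
      ring

lemma jtpG_self (q : ℂ) : ∀ n, jtpG q n n = 1
  | 0 => rfl
  | n+1 => by
      rw [jtpG, jtpG_zero q n (n+1) (by omega), jtpG_self q n]
      simp

/-- Cauchy binomial theorem. -/
lemma jtp_cauchy (q : ℂ) : ∀ (n : ℕ) (x : ℂ),
    ∏ j ∈ range n, (1 + x * q ^ j) =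
      ∑ k ∈ range (n+1), q ^ (k*(k-1)/2) * jtpG q n k * x ^ k := by
  intro n
  induction n with
  | zero => intro x; simp [jtpG]
  | succ n ih =>
    intro x
    set f : ℕ → ℂ := fun k => q ^ (k*(k-1)/2) * jtpG q n k * x ^ k with hf
    set F : ℕ → ℂ := fun k => q ^ (k*(k-1)/2) * jtpG q (n+1) k * x ^ k with hF
    have hfS : ∑ k ∈ range (n+1), f k = (∑ k ∈ range (n+1), f (k+1)) + f 0 := by
      have h2 := Finset.sum_range_succ' f (n+1)
      rw [Finset.sum_range_succ f (n+1)] at h2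
      have : f (n+1) = 0 := by
        simp [hf, jtpG_zero q n (n+1) (by omega)]
      rw [this, add_zero] at h2
      exact h2
    rw [prod_range_succ, ih, mul_add, mul_one]
    rw [show (∑ k ∈ range (n+1), f k) * (x * q ^ n)
        = ∑ k ∈ range (n+1), q ^ (k*(k-1)/2 + n) * jtpG q n k * x ^ (k+1) by
      rw [Finset.sum_mul]
      refine Finset.sum_congr rfl fun k _ => ?_
      rw [pow_add]; ring]
    rw [hfS, Finset.sum_range_succ' F (n+1)]
    have hF0 : F 0 = f 0 := by simp [hf, hF, jtpG, jtpG_self]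
    rw [hF0, add_right_comm, ← Finset.sum_add_distrib]
    congr 1
    refine Finset.sum_congr rfl fun k hk => ?_
    have hkn : k ≤ n := by simpa using Nat.lt_succ_iff.mp (mem_range.mp hk)
    show f (k+1) + q ^ (k*(k-1)/2 + n) * jtpG q n k * x ^ (k+1) = F (k+1)
    have : jtpG q (n+1) (k+1) = jtpG q n (k+1) + q ^ (n-k) * jtpG q n k := rfl
    have h2 : (k+1)*k = k*(k-1) + 2*k := by
      cases k with
      | zero => rfl
      | succ j => simp [Nat.succ_sub_one]; ring
    have h3 : k*(k-1)/2*2 = k*(k-1) := by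
      refine Nat.div_mul_cancel (Even.two_dvd ?_)
      rcases Nat.even_or_odd k with h | h
      · exact h.mul_right _
      · exact (Nat.Odd.sub_odd h odd_one).mul_left _
    have hexp : (k+1)*k/2 + (n-k) = k*(k-1)/2 + n := by omega
    rw [hF, hf]
    simp only [this]
    rw [show (k+1)*((k+1)-1)/2 = (k+1)*k/2 by norm_num]
    rw [← hexp, pow_add]
    ring

noncomputable def jtpPhi (q : ℂ) (K : ℕ) : ℂ := ∏ j ∈ range K, (1 - q ^ (j+1))


lemma jtpPhi_succ (q : ℂ) (K : ℕ) : jtpPhi q (K+1) = jtpPhi q K * (1 - q ^ (K+1)) :=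
  prod_range_succ _ _

/-- Product formula: `G (k+d) k * Φ k * Φ d = Φ (k+d)`. -/
lemma jtpG_phi (q : ℂ) : ∀ k d, jtpG q (k+d) k * jtpPhi q k * jtpPhi q d = jtpPhi q (k+d) := by
  intro k
  induction k with
  | zero => intro d; simp [jtpG, jtpPhi]
  | succ k ihk =>
    intro d
    induction d with
    | zero => simp [jtpG_self, jtpPhi]
    | succ d ihd =>
      have hA : k+1+(d+1) = (k+1+d)+1 := by omega
      rw [hA]
      have hrec : jtpG q ((k+1+d)+1) (k+1) = jtpG q (k+1+d) (k+1) + q^(d+1) * jtpG q (k+1+d) k := by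
        rw [jtpG, show (k+1+d)-k = d+1 by omega]
      have e1 : jtpG q (k+1+d) (k+1) * (jtpPhi q k * (1 - q^(k+1))) * jtpPhi q d
          = jtpPhi q (k+1+d) := by rw [← jtpPhi_succ]; exact ihd
      have e2 : jtpG q (k+1+d) k * jtpPhi q k * (jtpPhi q d * (1 - q^(d+1)))
          = jtpPhi q (k+1+d) := by
        have := ihk (d+1)
        rwa [show k+(d+1) = k+1+d by omega, jtpPhi_succ q d] at this
      rw [hrec, jtpPhi_succ q (k+1+d), jtpPhi_succ q d, jtpPhi_succ q k,
        show (k+1+d)+1 = (d+1)+(k+1) by omega, pow_add]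
      linear_combination (1 - q^(d+1)) * e1 + q^(d+1) * (1 - q^(k+1)) * e2

lemma jtp_nat_even (j : ℕ) : (j*(j-1)/2)*2 = j*(j-1) := by
  refine Nat.div_mul_cancel (Even.two_dvd ?_)
  rcases Nat.even_or_odd j with h | h
  · exact h.mul_right _
  · exact (Nat.Odd.sub_odd h odd_one).mul_left _

lemma jtp_cast_even (j : ℕ) : ((j*(j-1)/2 : ℕ) : ℤ) * 2 = (j:ℤ)*((j:ℤ)-1) := by
  cases j with
  | zero => simp
  | succ i =>
    have h := jtp_nat_even (i+1)
    rw [Nat.succ_sub_one] at h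
    have h' : (((i+1)*((i+1)-1)/2 : ℕ) : ℤ) * 2 = ((i+1 : ℕ) : ℤ) * ((i : ℕ) : ℤ) := by
      rw [Nat.succ_sub_one]; exact_mod_cast h
    rw [h']; push_cast; ring

lemma jtp_int_even (m : ℤ) : (((m*(m-1)/2).toNat : ℤ)) * 2 = m*(m-1) := by
  have hmev : Even (m*(m-1)) := by
    have := Int.even_mul_succ_self (m-1)
    simpa [sub_add_cancel, mul_comm] using this
  have hmnn : 0 ≤ m*(m-1) := by
    rcases le_or_gt m 0 with h | h
    · calc (0:ℤ) ≤ (-m)*(-(m-1)) := mul_nonneg (by omega) (by omega)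
        _ = m*(m-1) := by ring
    · exact mul_nonneg (by omega) (by omega)
  rw [Int.toNat_of_nonneg (Int.ediv_nonneg hmnn (by norm_num))]
  exact Int.ediv_mul_cancel hmev.two_dvd

/-- exponent bookkeeping -/
lemma jtp_exp (N k : ℕ) (m : ℤ) (hk : (k:ℤ) = N + m) :
    k*(k-1)/2 + N*N = N*(N-1)/2 + (m*(m-1)/2).toNat + N*k := by
  have ha := jtp_cast_even k
  have hb := jtp_cast_even N
  have hc := jtp_int_even m
  have h2 : (2:ℤ) * (((k*(k-1)/2 : ℕ) : ℤ) + (N:ℤ)*N)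
      = 2 * (((N*(N-1)/2 : ℕ) : ℤ) + ((m*(m-1)/2).toNat : ℤ) + (N:ℤ)*k) := by
    linear_combination ha - hb - hc + ((k:ℤ) - N + m - 1) * hk
  have hgoal : ((k*(k-1)/2 : ℕ) : ℤ) + (N:ℤ)*N
      = ((N*(N-1)/2 : ℕ) : ℤ) + ((m*(m-1)/2).toNat : ℤ) + (N:ℤ)*k := by linarith
  exact_mod_cast hgoal

lemma jtp_finite (q z : ℂ) (hq0 : q ≠ 0) (hz : z ≠ 0) (N : ℕ) :
    ∏ n ∈ range N, ((1 - q^(n+1) * z⁻¹) * (1 - q^n * z))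
      = ∑ m ∈ Icc (-(N:ℤ)) (N:ℤ),
          ((-1:ℂ)^m * q^((m*(m-1)/2).toNat) * z^m) * jtpG q (2*N) (N+m).toNat := by
  have hqN : (q:ℂ)^N ≠ 0 := pow_ne_zero _ hq0
  set x : ℂ := -(z * (q^N)⁻¹) with hx
  set cN : ℂ := (-1)^N * z^N * ((q^N)⁻¹)^N * q^(N*(N-1)/2) with hcN
  have hcN0 : cN ≠ 0 := by
    apply mul_ne_zero; apply mul_ne_zero; apply mul_ne_zero
    · exact pow_ne_zero _ (by norm_num)
    · exact pow_ne_zero _ hz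
    · exact pow_ne_zero _ (inv_ne_zero hqN)
    · exact pow_ne_zero _ hq0
  -- LHS transformation
  have hsplit : ∏ j ∈ range (2*N), (1 + x * q^j)
      = cN * ∏ n ∈ range N, ((1 - q^(n+1) * z⁻¹) * (1 - q^n * z)) := by
    rw [two_mul, prod_range_add]
    have h2 : ∀ i ∈ range N, (1 + x * q^(N+i)) = (1 - q^i * z) := by
      intro i _
      rw [hx, pow_add]
      field_simp
      ring
    have h1 : ∀ j ∈ range N, (1 + x * q^j) = (x * q^j) * (1 - q^(N-j) * z⁻¹) := by
      intro j hj
      have hjN : j ≤ N := le_of_lt (mem_range.mp hj)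
      have hpow : q^(N-j) * q^j = q^N := by rw [← pow_add]; congr 1; omega
      have hxqN : x * q^N = -z := by rw [hx]; field_simp
      have : (x * q^j) * (1 - q^(N-j) * z⁻¹) = x*q^j - (x*q^N)*z⁻¹ := by
        rw [← hpow]; ring
      rw [this, hxqN]
      have : -(-z) * z⁻¹ = 1 := by field_simp
      ring_nf
      ring_nf at this
      rw [mul_inv_cancel₀ hz]
      ring
    rw [prod_congr rfl h2, prod_congr rfl h1, prod_mul_distrib]
    have hxq : ∏ j ∈ range N, (x * q^j) = x^N * q^(N*(N-1)/2) := by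
      rw [prod_mul_distrib, prod_const, card_range, prod_pow_eq_pow_sum,
        Finset.sum_range_id]
    have hrefl : ∏ j ∈ range N, (1 - q^(N-j) * z⁻¹) = ∏ n ∈ range N, (1 - q^(n+1) * z⁻¹) := by
      rw [← Finset.prod_range_reflect (fun n => 1 - q^(n+1) * z⁻¹) N]
      refine prod_congr rfl fun j hj => ?_
      have h : N - 1 - j + 1 = N - j := by have := mem_range.mp hj; omega
      rw [h]
    rw [hxq, hrefl, prod_mul_distrib]
    rw [hcN, hx]
    rw [neg_pow, mul_pow]
    ring
  have key := jtp_cauchy q (2*N) x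
  rw [hsplit] at key
  refine mul_left_cancel₀ hcN0 ?_
  rw [key, Finset.mul_sum]
  refine Finset.sum_nbij' (i := fun (k:ℕ) => (k:ℤ) - N) (j := fun (m:ℤ) => (N + m).toNat)
    ?_ ?_ ?_ ?_ ?_
  · intro k hk
    have := mem_range.mp hk
    simp only [Finset.mem_Icc]
    omega
  · intro m hm
    have := Finset.mem_Icc.mp hm
    simp only [mem_range]
    omega
  · intro k hk
    show ((N:ℤ) + ((k:ℤ) - N)).toNat = k
    omega
  · intro m hm
    have := Finset.mem_Icc.mp hm
    show ((((N:ℤ) + m).toNat : ℕ) : ℤ) - N = m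
    omega
  · intro k hk
    have hkr := mem_range.mp hk
    set m : ℤ := (k:ℤ) - N with hm
    have hkm : (k:ℤ) = N + m := by omega
    have htoNat : (N + m).toNat = k := by omega
    rw [htoNat]
    have hexp := jtp_exp N k m hkm
    -- scalar identity
    have hzm : z^m = z^k * (z^N)⁻¹ := by
      rw [hm, zpow_sub₀ hz, zpow_natCast, zpow_natCast, div_eq_mul_inv]
    have hnm : (-1:ℂ)^m = (-1)^k * ((-1:ℂ)^N)⁻¹ := by
      rw [hm, zpow_sub₀ (by norm_num : (-1:ℂ) ≠ 0), zpow_natCast, zpow_natCast, div_eq_mul_inv]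
    have hxk : x^k = (-1)^k * z^k * ((q^N)⁻¹)^k := by
      rw [hx, show -(z * (q^N)⁻¹) = (-1) * (z * (q^N)⁻¹) by ring, mul_pow, mul_pow]
      ring
    rw [hxk, hcN, hzm, hnm]
    have hscalar : q ^ (k*(k-1)/2) * ((-1:ℂ)^k * z^k * ((q^N)⁻¹)^k)
        = ((-1)^N * z^N * ((q^N)⁻¹)^N * q^(N*(N-1)/2)) *
          (((-1:ℂ)^k * ((-1:ℂ)^N)⁻¹) * q^((m*(m-1)/2).toNat) * (z^k * (z^N)⁻¹)) := by
      have hn1 : ((-1:ℂ)^N) * ((-1:ℂ)^N)⁻¹ = 1 := mul_inv_cancel₀ (pow_ne_zero _ (by norm_num))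
      have hz1 : (z^N) * (z^N)⁻¹ = 1 := mul_inv_cancel₀ (pow_ne_zero _ hz)
      -- reduce to exponents
      have hmain : q ^ (k*(k-1)/2) * (q^(N*N)) = q^(N*(N-1)/2) * q^((m*(m-1)/2).toNat) * q^(N*k) := by
        rw [← pow_add, ← pow_add, ← pow_add, hexp]
      have hqk : ((q^N)⁻¹)^k * (q^(N*k)) = 1 := by
        rw [pow_mul q N k, ← mul_pow, inv_mul_cancel₀ hqN, one_pow]
      have hqN2 : ((q^N)⁻¹)^N * (q^(N*N)) = 1 := by
        rw [pow_mul q N N, ← mul_pow, inv_mul_cancel₀ hqN, one_pow]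
      -- multiply both sides by q^(N*k) * q^(N*N) and cancel
      have hcancel : (q:ℂ)^(N*k) ≠ 0 := pow_ne_zero _ hq0
      have hcancel2 : (q:ℂ)^(N*N) ≠ 0 := pow_ne_zero _ hq0
      refine mul_right_cancel₀ hcancel ?_
      refine mul_right_cancel₀ hcancel2 ?_
      calc q ^ (k*(k-1)/2) * ((-1:ℂ)^k * z^k * ((q^N)⁻¹)^k) * q^(N*k) * q^(N*N)
          = ((-1:ℂ)^k * z^k) * (((q^N)⁻¹)^k * q^(N*k)) * (q ^ (k*(k-1)/2) * q^(N*N)) := by ring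
        _ = ((-1:ℂ)^k * z^k) * (q^(N*(N-1)/2) * q^((m*(m-1)/2).toNat) * q^(N*k)) := by
            rw [hqk, hmain]; ring
        _ = _ := by
            rw [show ((-1:ℂ)^N * z^N * ((q^N)⁻¹)^N * q^(N*(N-1)/2)) *
                (((-1:ℂ)^k * ((-1:ℂ)^N)⁻¹) * q^((m*(m-1)/2).toNat) * (z^k * (z^N)⁻¹)) * q^(N*k) * q^(N*N)
                = (((-1:ℂ)^N) * ((-1:ℂ)^N)⁻¹) * ((z^N) * (z^N)⁻¹) * (((q^N)⁻¹)^N * (q^(N*N))) *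
                  ((-1:ℂ)^k * z^k) * (q^(N*(N-1)/2) * q^((m*(m-1)/2).toNat) * q^(N*k)) by ring]
            rw [hn1, hz1, hqN2]
            ring
    linear_combination jtpG q (2*N) k * hscalar

section main
variable {q z : ℂ}

/-- Norm of a term of the theta series. -/
lemma jtp_norm_a (q z : ℂ) (hz : z ≠ 0) (m : ℤ) :
    ‖(-1:ℂ)^m * q^((m*(m-1)/2).toNat) * z^m‖
      = ‖q‖ ^ ((m*(m-1)/2).toNat) * ‖z‖ ^ m := by
  rw [norm_mul, norm_mul, norm_zpow, norm_zpow, norm_pow]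
  simp

/-- Part 1: summability of the theta series, `q ≠ 0` case handled jointly with `q = 0`. -/
lemma jtp_summable (hq : ‖q‖ < 1) (hz : z ≠ 0) :
    Summable (fun m : ℤ => ‖(-1:ℂ)^m * q^((m*(m-1)/2).toNat) * z^m‖) := by
  set t := ‖q‖ with htdef
  have ht0 : 0 ≤ t := norm_nonneg q
  have hznorm : (0:ℝ) < ‖z‖ := norm_pos_iff.mpr hz
  -- the function in terms of norms
  have hnorm : ∀ m : ℤ, ‖(-1:ℂ)^m * q^((m*(m-1)/2).toNat) * z^m‖
      = t ^ ((m*(m-1)/2).toNat) * ‖z‖ ^ m := fun m => jtp_norm_a q z hz m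
  -- exponent recursions
  have hexp_pos : ∀ n : ℕ, (((n:ℤ)+1)*(((n:ℤ)+1)-1)/2).toNat = (((n:ℤ))*(((n:ℤ))-1)/2).toNat + n := by
    intro n
    have h1 := jtp_int_even ((n:ℤ)+1)
    have h2 := jtp_int_even (n:ℤ)
    have h3 : ((n:ℤ)+1)*(((n:ℤ)+1)-1) = (n:ℤ)*((n:ℤ)-1) + 2*n := by ring
    omega
  have hexp_neg : ∀ n : ℕ, ((-(n:ℤ)-1)*((-(n:ℤ)-1)-1)/2).toNat
      = ((-(n:ℤ))*((-(n:ℤ))-1)/2).toNat + (n+1) := by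
    intro n
    have h1 := jtp_int_even (-(n:ℤ)-1)
    have h2 := jtp_int_even (-(n:ℤ))
    have h3 : (-(n:ℤ)-1)*((-(n:ℤ)-1)-1) = (-(n:ℤ))*((-(n:ℤ))-1) + 2*(n+1) := by ring
    omega
  -- tendsto of t^n * c to 0
  have hgeo : ∀ c : ℝ, Tendsto (fun n : ℕ => t^n * c) atTop (𝓝 0) := by
    intro c
    have := tendsto_pow_atTop_nhds_zero_of_lt_one ht0 hq
    simpa using this.mul_const c
  have ht1 : t ≤ 1 := le_of_lt hq
  refine Summable.of_nat_of_neg ?_ ?_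
  · -- nonnegative side
    refine summable_of_ratio_norm_eventually_le (r := 1/2) (by norm_num) ?_
    have hev : ∀ᶠ n : ℕ in atTop, t^n * ‖z‖ ≤ 1/2 :=
      ((hgeo ‖z‖).eventually_lt_const (by norm_num : (0:ℝ) < 1/2)).mono fun n h => le_of_lt h
    filter_upwards [hev] with n hn
    rw [Real.norm_of_nonneg (by rw [hnorm]; positivity),
      Real.norm_of_nonneg (by rw [hnorm]; positivity), hnorm, hnorm]
    have hcast : ((n+1 : ℕ) : ℤ) = (n:ℤ) + 1 := by push_cast; ring
    rw [hcast, hexp_pos n, pow_add, zpow_add_one₀ (ne_of_gt hznorm)]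
    calc t ^ (((n:ℤ)*((n:ℤ)-1)/2).toNat) * t^n * (‖z‖ ^ (n:ℤ) * ‖z‖)
        = (t^n * ‖z‖) * (t ^ (((n:ℤ)*((n:ℤ)-1)/2).toNat) * ‖z‖ ^ (n:ℤ)) := by ring
      _ ≤ 1/2 * (t ^ (((n:ℤ)*((n:ℤ)-1)/2).toNat) * ‖z‖ ^ (n:ℤ)) := by
          refine mul_le_mul_of_nonneg_right hn ?_
          positivity
  · -- negative side
    refine summable_of_ratio_norm_eventually_le (r := 1/2) (by norm_num) ?_
    have hev : ∀ᶠ n : ℕ in atTop, t^n * ‖z‖⁻¹ ≤ 1/2 :=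
      ((hgeo ‖z‖⁻¹).eventually_lt_const (by norm_num : (0:ℝ) < 1/2)).mono fun n h => le_of_lt h
    filter_upwards [hev] with n hn
    rw [Real.norm_of_nonneg (by rw [hnorm]; positivity),
      Real.norm_of_nonneg (by rw [hnorm]; positivity), hnorm, hnorm]
    have hcast : (-((n+1 : ℕ) : ℤ)) = -(n:ℤ) - 1 := by push_cast; ring
    rw [hcast, hexp_neg n, pow_add]
    have hzpow : ‖z‖ ^ (-(n:ℤ) - 1) = ‖z‖ ^ (-(n:ℤ)) * ‖z‖⁻¹ := by
      rw [sub_eq_add_neg, zpow_add₀ (ne_of_gt hznorm), zpow_neg_one]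
    rw [hzpow]
    have hstep : t^(n+1) * ‖z‖⁻¹ ≤ 1/2 := by
      calc t^(n+1) * ‖z‖⁻¹ ≤ t^n * ‖z‖⁻¹ := by
            refine mul_le_mul_of_nonneg_right ?_ (by positivity)
            exact pow_le_pow_of_le_one ht0 ht1 (by omega)
        _ ≤ 1/2 := hn
    calc t ^ ((-(n:ℤ)*((-(n:ℤ))-1)/2).toNat) * t^(n+1) * (‖z‖ ^ (-(n:ℤ)) * ‖z‖⁻¹)
        = (t^(n+1) * ‖z‖⁻¹) * (t ^ ((-(n:ℤ)*((-(n:ℤ))-1)/2).toNat) * ‖z‖ ^ (-(n:ℤ))) := by ring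
      _ ≤ 1/2 * (t ^ ((-(n:ℤ)*((-(n:ℤ))-1)/2).toNat) * ‖z‖ ^ (-(n:ℤ))) := by
          refine mul_le_mul_of_nonneg_right hstep ?_
          positivity

lemma jtp_factor_ne (hq : ‖q‖ < 1) (j : ℕ) : 1 - q^(j+1) ≠ 0 := by
  intro h
  have h1 : q^(j+1) = 1 := by linear_combination -h
  have : ‖q^(j+1)‖ < 1 := by
    rw [norm_pow]
    exact pow_lt_one₀ (norm_nonneg q) hq (by omega)
  rw [h1] at this
  simp at this

lemma jtp_log_summable (hq : ‖q‖ < 1) :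
    Summable (fun j : ℕ => ‖Complex.log (1 - q^(j+1))‖) := by
  set t := ‖q‖ with htdef
  have ht0 : 0 ≤ t := norm_nonneg q
  refine Summable.of_norm_bounded_eventually_nat (g := fun j => 3/2 * t^(j+1)) ?_ ?_
  · exact ((summable_geometric_of_lt_one ht0 hq).mul_left _).comp_injective Nat.succ_injective
      |>.congr fun j => rfl
  · have hev : ∀ᶠ j : ℕ in atTop, t^(j+1) ≤ 1/2 := by
      have hgeo : Tendsto (fun j : ℕ => t^(j+1)) atTop (𝓝 0) := by
        have := tendsto_pow_atTop_nhds_zero_of_lt_one ht0 hq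
        exact this.comp (tendsto_add_atTop_nat 1)
      exact (hgeo.eventually_lt_const (by norm_num : (0:ℝ) < 1/2)).mono fun n h => le_of_lt h
    filter_upwards [hev] with j hj
    rw [norm_norm]
    have : (1 : ℂ) - q^(j+1) = 1 + (-(q^(j+1))) := by ring
    rw [this]
    have hb : ‖(-(q^(j+1)) : ℂ)‖ ≤ 1/2 := by
      rw [norm_neg, norm_pow]
      exact hj
    calc ‖Complex.log (1 + -q^(j+1))‖ ≤ 3/2 * ‖(-(q^(j+1)) : ℂ)‖ :=
          Complex.norm_log_one_add_half_le_self hb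
      _ = 3/2 * t^(j+1) := by rw [norm_neg, norm_pow]

lemma jtpPhi_exp (hq : ‖q‖ < 1) (K : ℕ) :
    jtpPhi q K = Complex.exp (∑ j ∈ range K, Complex.log (1 - q^(j+1))) := by
  rw [Complex.exp_sum]
  exact prod_congr rfl fun j _ => (Complex.exp_log (jtp_factor_ne hq j)).symm

lemma jtpPhi_ne (hq : ‖q‖ < 1) (K : ℕ) : jtpPhi q K ≠ 0 := by
  rw [jtpPhi_exp hq]; exact Complex.exp_ne_zero _

lemma jtpPhi_bounds (hq : ‖q‖ < 1) (K : ℕ) :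
    Real.exp (-(∑' j : ℕ, ‖Complex.log (1 - q^(j+1))‖)) ≤ ‖jtpPhi q K‖ ∧
    ‖jtpPhi q K‖ ≤ Real.exp (∑' j : ℕ, ‖Complex.log (1 - q^(j+1))‖) := by
  set S := ∑' j : ℕ, ‖Complex.log (1 - q^(j+1))‖ with hS
  have hsum := jtp_log_summable (q := q) hq
  have hre : |(∑ j ∈ range K, Complex.log (1 - q^(j+1))).re| ≤ S := by
    have h1 : |(∑ j ∈ range K, Complex.log (1 - q^(j+1))).re|
        ≤ ‖∑ j ∈ range K, Complex.log (1 - q^(j+1))‖ := Complex.abs_re_le_norm _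
    refine h1.trans ((norm_sum_le _ _).trans ?_)
    exact Summable.sum_le_tsum (range K) (fun j _ => norm_nonneg _) hsum
  rw [jtpPhi_exp hq, Complex.norm_exp]
  constructor
  · exact Real.exp_le_exp.mpr (by cases abs_le.mp hre; linarith)
  · exact Real.exp_le_exp.mpr (by cases abs_le.mp hre; linarith)

lemma jtpPhi_tendsto (hq : ‖q‖ < 1) :
    Tendsto (jtpPhi q) atTop
      (𝓝 (Complex.exp (∑' j : ℕ, Complex.log (1 - q^(j+1))))) := by
  have hsum : Summable (fun j : ℕ => Complex.log (1 - q^(j+1))) :=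
    (jtp_log_summable hq).of_norm
  have h1 := hsum.hasSum.tendsto_sum_nat
  have h2 := (Complex.continuous_exp.tendsto _).comp h1
  refine h2.congr fun K => ?_
  exact (jtpPhi_exp hq K).symm

lemma jtp_tendsto_partial (hq : ‖q‖ < 1) (hz : z ≠ 0) (hq0 : q ≠ 0) :
    Tendsto (fun N => ∏ n ∈ range N,
        ((1 - q^(n+1)) * (1 - q^(n+1)*z⁻¹) * (1 - q^n*z))) atTop
      (𝓝 (∑' m : ℤ, (-1:ℂ)^m * q^((m*(m-1)/2).toNat) * z^m)) := by
  set a : ℤ → ℂ := fun m => (-1:ℂ)^m * q^((m*(m-1)/2).toNat) * z^m with ha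
  set S := ∑' j : ℕ, ‖Complex.log (1 - q^(j+1))‖ with hSdef
  set C : ℝ := (Real.exp S)^4 with hC
  have hC0 : 0 < C := by positivity
  set d : ℕ → ℤ → ℂ := fun N m =>
    if -(N:ℤ) ≤ m ∧ m ≤ (N:ℤ) then jtpPhi q N * jtpG q (2*N) (((N:ℤ)+m)).toNat else 0 with hd
  have hd_closed : ∀ N : ℕ, ∀ m : ℤ, -(N:ℤ) ≤ m → m ≤ (N:ℤ) →
      d N m = jtpPhi q N * jtpPhi q (2*N) * (jtpPhi q (((N:ℤ)+m).toNat))⁻¹ *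
        (jtpPhi q (((N:ℤ)-m).toNat))⁻¹ := by
    intro N m h1 h2
    have hkdd : (((N:ℤ)+m).toNat) + (((N:ℤ)-m).toNat) = 2*N := by omega
    have hGphi := jtpG_phi q (((N:ℤ)+m).toNat) (((N:ℤ)-m).toNat)
    rw [hkdd] at hGphi
    have hne1 := jtpPhi_ne hq (((N:ℤ)+m).toNat)
    have hne2 := jtpPhi_ne hq (((N:ℤ)-m).toNat)
    rw [hd]
    simp only [if_pos (And.intro h1 h2)]
    field_simp
    linear_combination jtpPhi q N * hGphi
  have habs_d : ∀ N : ℕ, ∀ m : ℤ, ‖d N m‖ ≤ C := by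
    intro N m
    by_cases hcase : -(N:ℤ) ≤ m ∧ m ≤ (N:ℤ)
    · rw [hd_closed N m hcase.1 hcase.2]
      have hb1 := jtpPhi_bounds (q := q) hq N
      have hb2 := jtpPhi_bounds (q := q) hq (2*N)
      have hb3 := jtpPhi_bounds (q := q) hq (((N:ℤ)+m).toNat)
      have hb4 := jtpPhi_bounds (q := q) hq (((N:ℤ)-m).toNat)
      rw [norm_mul, norm_mul, norm_mul, norm_inv, norm_inv]
      have hinv : ∀ K : ℕ, (‖jtpPhi q K‖)⁻¹ ≤ Real.exp S := by
        intro K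
        have hb := (jtpPhi_bounds (q := q) hq K).1
        rw [← hSdef] at hb
        calc (‖jtpPhi q K‖)⁻¹ ≤ (Real.exp (-S))⁻¹ :=
              inv_anti₀ (Real.exp_pos _) hb
          _ = Real.exp S := by rw [Real.exp_neg, inv_inv]
      have e1 : ‖jtpPhi q N‖ ≤ Real.exp S := hb1.2
      have e2 : ‖jtpPhi q (2*N)‖ ≤ Real.exp S := hb2.2
      have e3 := hinv (((N:ℤ)+m).toNat)
      have e4 := hinv (((N:ℤ)-m).toNat)
      have hexppos : (0:ℝ) < Real.exp S := Real.exp_pos _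
      calc ‖jtpPhi q N‖ * ‖jtpPhi q (2*N)‖ *
            (‖jtpPhi q (((N:ℤ)+m).toNat)‖)⁻¹ *
            (‖jtpPhi q (((N:ℤ)-m).toNat)‖)⁻¹
          ≤ Real.exp S * Real.exp S * Real.exp S * Real.exp S := by
            gcongr <;> positivity
        _ = C := by rw [hC]; ring
    · rw [hd]; simp only [if_neg hcase]
      simp only [norm_zero]
      positivity
  have hd_tendsto : ∀ m : ℤ, Tendsto (fun N => d N m) atTop (𝓝 1) := by
    intro m
    set L := Complex.exp (∑' j : ℕ, Complex.log (1 - q^(j+1))) with hLdef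
    have hL := jtpPhi_tendsto (q := q) hq
    have hL0 : L ≠ 0 := Complex.exp_ne_zero _
    have h2N : Tendsto (fun N : ℕ => jtpPhi q (2*N)) atTop (𝓝 L) :=
      hL.comp (tendsto_atTop_atTop.mpr fun b => ⟨b, fun N hN => by omega⟩)
    have hk : Tendsto (fun N : ℕ => (((N:ℤ)+m)).toNat) atTop atTop :=
      tendsto_atTop_atTop.mpr fun b => ⟨b + m.natAbs, fun N hN => by omega⟩
    have hdd : Tendsto (fun N : ℕ => (((N:ℤ)-m)).toNat) atTop atTop :=
      tendsto_atTop_atTop.mpr fun b => ⟨b + m.natAbs, fun N hN => by omega⟩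
    have hmain : Tendsto (fun N : ℕ => jtpPhi q N * jtpPhi q (2*N) *
        (jtpPhi q (((N:ℤ)+m).toNat))⁻¹ * (jtpPhi q (((N:ℤ)-m).toNat))⁻¹) atTop
        (𝓝 (L * L * L⁻¹ * L⁻¹)) :=
      ((hL.mul h2N).mul ((hL.comp hk).inv₀ hL0)).mul ((hL.comp hdd).inv₀ hL0)
    have hone : L * L * L⁻¹ * L⁻¹ = 1 := by field_simp
    rw [hone] at hmain
    refine Tendsto.congr' ?_ hmain
    filter_upwards [eventually_ge_atTop m.natAbs] with N hN
    exact (hd_closed N m (by omega) (by omega)).symm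
  have hSummable := jtp_summable (q := q) (z := z) hq hz
  have hTannery : Tendsto (fun N => ∑' m : ℤ, a m * d N m) atTop (𝓝 (∑' m : ℤ, a m)) := by
    refine tendsto_tsum_of_dominated_convergence (bound := fun m => C * ‖a m‖)
      (hSummable.mul_left C) (fun m => ?_) ?_
    · have := (hd_tendsto m).const_mul (a m)
      simpa using this
    · refine Eventually.of_forall fun N => fun m => ?_
      rw [norm_mul]
      calc ‖a m‖ * ‖d N m‖ ≤ ‖a m‖ * C :=
            mul_le_mul_of_nonneg_left (habs_d N m) (norm_nonneg _)
        _ = C * ‖a m‖ := by ring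
  have hfin : ∀ N : ℕ, ∑' m : ℤ, a m * d N m
      = ∏ n ∈ range N, ((1 - q^(n+1)) * (1 - q^(n+1)*z⁻¹) * (1 - q^n*z)) := by
    intro N
    rw [tsum_eq_sum (s := Icc (-(N:ℤ)) (N:ℤ)) ?side]
    case side =>
      intro m hm
      simp only [Finset.mem_Icc] at hm
      simp only [hd]
      rw [if_neg hm, mul_zero]
    have hstep : ∀ m ∈ Icc (-(N:ℤ)) (N:ℤ), a m * d N m
        = jtpPhi q N * (a m * jtpG q (2*N) (((N:ℤ)+m)).toNat) := by
      intro m hm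
      simp only [Finset.mem_Icc] at hm
      simp only [hd]
      rw [if_pos (And.intro hm.1 hm.2)]
      ring
    rw [Finset.sum_congr rfl hstep, ← Finset.mul_sum]
    have hcast : ∀ m : ℤ, (((N:ℤ)+m)).toNat = ((N:ℤ)+m).toNat := fun _ => rfl
    rw [← jtp_finite q z hq0 hz N]
    have hsplit : ∏ n ∈ range N, ((1 - q^(n+1)) * (1 - q^(n+1)*z⁻¹) * (1 - q^n*z))
        = (∏ n ∈ range N, (1 - q^(n+1))) *
          ∏ n ∈ range N, ((1 - q^(n+1)*z⁻¹) * (1 - q^n*z)) := by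
      rw [← Finset.prod_mul_distrib]
      exact prod_congr rfl fun n _ => by ring
    rw [hsplit]
    rfl
  exact Tendsto.congr hfin hTannery

lemma jtp_multipliable (hq : ‖q‖ < 1) (hz : z ≠ 0) :
    Multipliable (fun n : ℕ => (1 - q^(n+1)) * (1 - q^(n+1)*z⁻¹) * (1 - q^n*z)) := by
  set f : ℕ → ℂ := fun n => (1 - q^(n+1)) * (1 - q^(n+1)*z⁻¹) * (1 - q^n*z) with hf
  by_cases hzero : ∃ n, f n = 0
  · obtain ⟨n0, h0⟩ := hzero
    refine ⟨0, ?_⟩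
    have hev : (fun s : Finset ℕ => ∏ i ∈ s, f i) =ᶠ[atTop] (fun _ => 0) := by
      filter_upwards [eventually_ge_atTop ({n0} : Finset ℕ)] with s hs
      exact Finset.prod_eq_zero (hs (Finset.mem_singleton_self n0)) h0
    exact Tendsto.congr' hev.symm tendsto_const_nhds
  · push_neg at hzero
    set t := ‖q‖ with htdef
    have ht0 : 0 ≤ t := norm_nonneg q
    have ht1 : t ≤ 1 := le_of_lt hq
    set M : ℝ := max 1 (max ‖z‖ ‖z⁻¹‖) with hM
    have hM1 : (1:ℝ) ≤ M := le_max_left _ _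
    set K : ℝ := 3*M + 3*M^2 + M^3 with hK
    have hK0 : 0 < K := by positivity
    have hfb : ∀ n : ℕ, ‖f n - 1‖ ≤ K * t^n := by
      intro n
      set A := q^(n+1) with hA
      set B := q^(n+1) * z⁻¹ with hB
      set Cc := q^n * z with hCc
      have htn0 : (0:ℝ) ≤ t^n := by positivity
      have htn1 : t^n ≤ 1 := pow_le_one₀ ht0 ht1
      have hnA : ‖A‖ ≤ t^n * M := by
        rw [hA, norm_pow]
        calc t^(n+1) ≤ t^n := pow_le_pow_of_le_one ht0 ht1 (by omega)
          _ = t^n * 1 := by ring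
          _ ≤ t^n * M := by gcongr
      have hnB : ‖B‖ ≤ t^n * M := by
        rw [hB, norm_mul, norm_pow]
        calc t^(n+1) * ‖z⁻¹‖ ≤ t^n * ‖z⁻¹‖ :=
              mul_le_mul_of_nonneg_right (pow_le_pow_of_le_one ht0 ht1 (Nat.le_succ n))
                (norm_nonneg _)
          _ ≤ t^n * M := by
              gcongr
              exact le_trans (le_max_right _ _) (le_max_right _ _)
      have hnC : ‖Cc‖ ≤ t^n * M := by
        rw [hCc, norm_mul, norm_pow]
        gcongr
        exact le_trans (le_max_left _ _) (le_max_right _ _)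
      have hexpand : f n - 1 = -(A + B + Cc) + (A*B + A*Cc + B*Cc) - A*B*Cc := by
        rw [hf]; simp only [hA, hB, hCc]; ring
      have h1 : ‖f n - 1‖ ≤ ‖A‖+‖B‖+‖Cc‖ + (‖A‖*‖B‖ + ‖A‖*‖Cc‖ + ‖B‖*‖Cc‖)
          + ‖A‖*‖B‖*‖Cc‖ := by
        rw [hexpand]
        calc ‖-(A + B + Cc) + (A*B + A*Cc + B*Cc) - A*B*Cc‖
            ≤ ‖-(A + B + Cc) + (A*B + A*Cc + B*Cc)‖ + ‖A*B*Cc‖ := norm_sub_le _ _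
          _ ≤ ‖-(A + B + Cc)‖ + ‖A*B + A*Cc + B*Cc‖ + ‖A*B*Cc‖ := by
              gcongr
              exact norm_add_le _ _
          _ ≤ (‖A‖+‖B‖+‖Cc‖) + (‖A‖*‖B‖ + ‖A‖*‖Cc‖ + ‖B‖*‖Cc‖) + ‖A‖*‖B‖*‖Cc‖ := by
              gcongr
              · rw [norm_neg]
                calc ‖A + B + Cc‖ ≤ ‖A + B‖ + ‖Cc‖ := norm_add_le _ _
                  _ ≤ ‖A‖ + ‖B‖ + ‖Cc‖ := by gcongr; exact norm_add_le _ _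
              · calc ‖A*B + A*Cc + B*Cc‖ ≤ ‖A*B + A*Cc‖ + ‖B*Cc‖ := norm_add_le _ _
                  _ ≤ ‖A*B‖ + ‖A*Cc‖ + ‖B*Cc‖ := by gcongr; exact norm_add_le _ _
                  _ = ‖A‖*‖B‖ + ‖A‖*‖Cc‖ + ‖B‖*‖Cc‖ := by simp only [norm_mul]
              · simp only [norm_mul]; exact le_rfl
          _ = ‖A‖+‖B‖+‖Cc‖ + (‖A‖*‖B‖ + ‖A‖*‖Cc‖ + ‖B‖*‖Cc‖) + ‖A‖*‖B‖*‖Cc‖ := by ring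
      refine h1.trans ?_
      have hAB : ‖A‖*‖B‖ ≤ t^n * M^2 := by
        calc ‖A‖*‖B‖ ≤ (t^n*M)*(t^n*M) :=
              mul_le_mul hnA hnB (norm_nonneg _) (by positivity)
          _ = (t^n*t^n)*(M*M) := by ring
          _ ≤ (1*t^n)*(M*M) := by gcongr
          _ = t^n * M^2 := by ring
      have hAC : ‖A‖*‖Cc‖ ≤ t^n * M^2 := by
        calc ‖A‖*‖Cc‖ ≤ (t^n*M)*(t^n*M) :=
              mul_le_mul hnA hnC (norm_nonneg _) (by positivity)
          _ = (t^n*t^n)*(M*M) := by ring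
          _ ≤ (1*t^n)*(M*M) := by gcongr
          _ = t^n * M^2 := by ring
      have hBC : ‖B‖*‖Cc‖ ≤ t^n * M^2 := by
        calc ‖B‖*‖Cc‖ ≤ (t^n*M)*(t^n*M) :=
              mul_le_mul hnB hnC (norm_nonneg _) (by positivity)
          _ = (t^n*t^n)*(M*M) := by ring
          _ ≤ (1*t^n)*(M*M) := by gcongr
          _ = t^n * M^2 := by ring
      have hABC : ‖A‖*‖B‖*‖Cc‖ ≤ t^n * M^3 := by
        calc ‖A‖*‖B‖*‖Cc‖ ≤ (t^n*M^2)*(t^n*M) :=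
              mul_le_mul hAB hnC (norm_nonneg _) (by positivity)
          _ = (t^n*t^n)*(M^2*M) := by ring
          _ ≤ (1*t^n)*(M^2*M) := by gcongr
          _ = t^n * M^3 := by ring
      calc ‖A‖+‖B‖+‖Cc‖ + (‖A‖*‖B‖ + ‖A‖*‖Cc‖ + ‖B‖*‖Cc‖) + ‖A‖*‖B‖*‖Cc‖
          ≤ (t^n*M + t^n*M + t^n*M) + (t^n*M^2 + t^n*M^2 + t^n*M^2) + t^n*M^3 := by
            gcongr
        _ = K * t^n := by rw [hK]; ring
    have hlog : Summable fun n => Complex.log (f n) := by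
      refine Summable.of_norm ?_
      refine Summable.of_norm_bounded_eventually_nat (g := fun n => 3/2 * (K * t^n)) ?_ ?_
      · exact ((summable_geometric_of_lt_one ht0 hq).mul_left K).mul_left (3/2)
      · have hev : ∀ᶠ n : ℕ in atTop, K * t^n ≤ 1/2 := by
          have hgeo : Tendsto (fun n : ℕ => K * t^n) atTop (𝓝 0) := by
            have := tendsto_pow_atTop_nhds_zero_of_lt_one ht0 hq
            simpa using this.const_mul K
          exact (hgeo.eventually_lt_const (by norm_num : (0:ℝ) < 1/2)).mono
            fun n h => le_of_lt h
        filter_upwards [hev] with n hn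
        rw [norm_norm]
        have hw : ‖f n - 1‖ ≤ 1/2 := le_trans (hfb n) hn
        have : f n = 1 + (f n - 1) := by ring
        rw [this]
        calc ‖Complex.log (1 + (f n - 1))‖ ≤ 3/2 * ‖f n - 1‖ :=
              Complex.norm_log_one_add_half_le_self hw
          _ ≤ 3/2 * (K * t^n) := by gcongr; exact hfb n
    have := Complex.multipliable_of_summable_log hlog
    exact this

end main

/-- **Jacobi's triple product identity, analytic form.**
For complex numbers `q`, `z` with `|q| < 1` and `z ≠ 0`, the doubly infinite series
`∑_{m ∈ ℤ} (-1)^m q^(m(m-1)/2) z^m` converges absolutely, the infinite product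
`∏_{n=1}^∞ (1 - q^n)(1 - q^n z⁻¹)(1 - q^(n-1) z)` converges (absolutely, in the sense
of multipliability), and the sum equals the product.  Here `m * (m - 1) / 2` is a
nonnegative integer for every `m : ℤ`, so `q ^ (m * (m - 1) / 2).toNat` is the
usual nonnegative integer power. -/
theorem jacobi_triple_product_analytic (q z : ℂ) (hq : ‖q‖ < 1) (hz : z ≠ 0) :
    Summable (fun m : ℤ => ‖(-1) ^ m * q ^ (m * (m - 1) / 2).toNat * z ^ m‖) ∧
    Multipliable (fun n : ℕ => (1 - q ^ (n + 1)) * (1 - q ^ (n + 1) * z⁻¹) * (1 - q ^ n * z)) ∧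
    ∑' m : ℤ, (-1) ^ m * q ^ (m * (m - 1) / 2).toNat * z ^ m =
      ∏' n : ℕ, (1 - q ^ (n + 1)) * (1 - q ^ (n + 1) * z⁻¹) * (1 - q ^ n * z) := by
  by_cases hq0 : q = 0
  · subst hq0
    have hTnz : ∀ m : ℤ, m ≠ 0 → m ≠ 1 → (m * (m-1) / 2).toNat ≠ 0 := by
      intro m h0 h1 hT
      have := jtp_int_even m
      rw [hT] at this
      simp at this
      omega
    have hvanish : ∀ m : ℤ, m ∉ ({0, 1} : Finset ℤ) →
        ((-1:ℂ)) ^ m * (0:ℂ) ^ (m * (m - 1) / 2).toNat * z ^ m = 0 := by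
      intro m hm
      simp only [Finset.mem_insert, Finset.mem_singleton] at hm
      push_neg at hm
      rw [zero_pow (hTnz m hm.1 hm.2)]
      ring
    have hfone : ∀ n : ℕ, n ∉ ({0} : Finset ℕ) →
        (1 - (0:ℂ) ^ (n + 1)) * (1 - (0:ℂ) ^ (n + 1) * z⁻¹) * (1 - (0:ℂ) ^ n * z) = 1 := by
      intro n hn
      simp only [Finset.mem_singleton] at hn
      rw [zero_pow (by omega : n + 1 ≠ 0), zero_pow hn]
      ring
    refine ⟨?_, ?_, ?_⟩
    · refine summable_of_ne_finset_zero (s := ({0, 1} : Finset ℤ)) ?_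
      intro m hm
      rw [hvanish m hm, norm_zero]
    · exact multipliable_of_ne_finset_one hfone
    · rw [tsum_eq_sum (s := ({0, 1} : Finset ℤ)) hvanish,
        tprod_eq_prod (s := ({0} : Finset ℕ)) hfone]
      rw [Finset.sum_pair (by norm_num : (0:ℤ) ≠ 1), Finset.prod_singleton]
      norm_num
      ring
  · exact ⟨jtp_summable hq hz, jtp_multipliable hq hz,
      tendsto_nhds_unique (jtp_tendsto_partial hq hz hq0)
        (jtp_multipliable hq hz).hasProd.tendsto_prod_nat⟩
end

section
/- Jacobi's triple product identity (formal form): in the ring of formal power series in q with coefficients in the ring of Laurent polynomials ℤ[z, z^{-1}], one has the identity ∑_{m ∈ ℤ} (-1)^m q^{m(m-1)/2} z^m = ∏_{n=1}^{∞} (1 - q^n)(1 - q^n z^{-1})(1 - q^{n-1} z). Both sides are well defined: for each fixed power of q only finitely many integers m satisfy m(m-1)/2 equal to that power, and the infinite product converges in the (q)-adic topology on the formal power series ring. -/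
open LaurentPolynomial Polynomial Finset

namespace JTP

noncomputable section

abbrev R := LaurentPolynomial ℤ
abbrev P := Polynomial R

local notation "q" => (Polynomial.X : P)

/-- Gaussian binomial coefficients as polynomials in `q = X`. -/
def G : ℕ → ℕ → P
  | _, 0 => 1
  | 0, _+1 => 0
  | n+1, k+1 => q ^ (k+1) * G n (k+1) + G n k

@[simp] lemma G_zero (n : ℕ) : G n 0 = 1 := by cases n <;> rfl

@[simp] lemma G_zero_succ (k : ℕ) : G 0 (k+1) = 0 := rfl

lemma G_succ (n k : ℕ) : G (n+1) (k+1) = q ^ (k+1) * G n (k+1) + G n k := rfl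

lemma G_eq_zero : ∀ {n k : ℕ}, n < k → G n k = 0 := by
  intro n
  induction n with
  | zero => intro k hk; match k, hk with | k+1, _ => rfl
  | succ n ih =>
    intro k hk
    match k, hk with
    | k+1, hk =>
      rw [G_succ, ih (by omega), ih (by omega)]
      ring

@[simp] lemma G_self : ∀ n : ℕ, G n n = 1 := by
  intro n
  induction n with
  | zero => rfl
  | succ n ih => rw [G_succ, ih, G_eq_zero (by omega)]; ring

/-- The absorption identity. -/
lemma G_ab : ∀ (n k : ℕ), (q ^ (k+1) - 1) * G n (k+1) = (q ^ (n-k) - 1) * G n k := by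
  intro n
  induction n with
  | zero =>
    intro k
    cases k with
    | zero => simp
    | succ k => simp
  | succ n ih =>
    intro k
    cases k with
    | zero =>
      have h0 := ih 0
      simp only [Nat.sub_zero, G_zero, mul_one] at h0 ⊢
      rw [G_succ]
      simp only [G_zero]
      linear_combination (Polynomial.X : P) * h0
    | succ k =>
      rcases le_or_gt n k with h | h
      · -- degenerate: G n (k+1) = 0, G n (k+2) = 0
        rw [G_succ, G_succ, G_eq_zero (show n < k+2 by omega), G_eq_zero (show n < k+1 by omega)]
        rcases eq_or_lt_of_le h with rfl | h'
        · have : n + 1 - (n + 1) = 0 := by omega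
          rw [this]; simp
        · rw [G_eq_zero (show n < k by omega)]
          have : n + 1 - (k + 1) = 0 := by omega
          rw [this]; simp
      · -- main case k < n
        obtain ⟨d, rfl⟩ : ∃ d, n = k + 1 + d := ⟨n - k - 1, by omega⟩
        have e1 : k + 1 + d - k = d + 1 := by omega
        have e2 : k + 1 + d + 1 - (k + 1) = d + 1 := by omega
        have e3 : k + 1 + d - (k + 1) = d := by omega
        have ih1 := ih (k+1)
        have ih2 := ih k
        rw [e1] at ih2
        rw [e3] at ih1
        rw [G_succ, G_succ, e2]
        linear_combination (Polynomial.X : P) ^ (k+2) * ih1 + ih2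

lemma G_pascal' (n k : ℕ) : G (n+1) (k+1) = G n (k+1) + q ^ (n-k) * G n k := by
  rw [G_succ]
  linear_combination G_ab n k

/-- symmetry -/
lemma G_symm : ∀ (n k : ℕ), k ≤ n → G n k = G n (n - k) := by
  intro n
  induction n with
  | zero => intro k hk; interval_cases k; simp
  | succ n ih =>
    intro k hk
    cases k with
    | zero => simp
    | succ k =>
      rcases eq_or_lt_of_le hk with heq | hk'
      · obtain rfl : k = n := by omega
        simp
      · -- 1 ≤ k+1 ≤ n
        have hkn : k + 1 ≤ n := by omega
        have hkn' : k ≤ n := by omega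
        have e0 : n + 1 - (k+1) = (n - k - 1) + 1 := by omega
        rw [e0, G_succ, G_succ]
        have s1 : G n (n - k - 1 + 1) = G n k := by
          have : n - k - 1 + 1 = n - k := by omega
          rw [this, ← ih k hkn']
        have s2 : G n (n - k - 1) = G n (k+1) := by
          have : n - k - 1 = n - (k+1) := by omega
          rw [this, ← ih (k+1) hkn]
        rw [s1, s2]
        have hab := G_ab n k
        have e1 : n - k = n - k - 1 + 1 := by omega
        rw [e1] at hab
        linear_combination hab

lemma G_dp (n k : ℕ) : G (n+2) (k+2) =
    q ^ (k+2) * G n (k+2) + (1 + q ^ (n+1)) * G n (k+1) + q ^ (n-k) * G n k := by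
  rw [G_succ, G_pascal' n (k+1), G_pascal' n k]
  rcases le_or_gt (k+1) n with h | h
  · have e : n - (k+1) = n - k - 1 := by omega
    obtain ⟨d, hd⟩ : ∃ d, n - k = d + 1 := ⟨n - k - 1, by omega⟩
    have e2 : n - (k+1) = d := by omega
    have e3 : (k+2) + d = n + 1 := by omega
    rw [e2, hd]
    calc q ^ (k+2) * (G n (k+2) + q ^ d * G n (k+1)) + (G n (k+1) + q ^ (d+1) * G n k)
        = q ^ (k+2) * G n (k+2) + (1 + q^(k+2) * q^d) * G n (k+1) + q ^ (d+1) * G n k := by ring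
      _ = _ := by rw [← pow_add, e3]
  · rw [G_eq_zero (show n < k + 1 by omega), G_eq_zero (show n < k + 2 by omega)]
    ring

lemma G_dp1 (n : ℕ) : G (n+2) 1 = q * G n 1 + (1 + q ^ (n+1)) := by
  have h := G_ab n 0
  simp only [Nat.sub_zero, G_zero, mul_one] at h
  rw [G_succ, G_succ]
  simp only [G_zero]
  linear_combination (Polynomial.X : P) * h

/-- Key: `∏_{i<a}(1-q^{i+1}) * G (a+b) a = ∏_{i<a} (1 - q^{b+i+1})`. -/
lemma G_key : ∀ (a b : ℕ),
    (∏ i ∈ range a, (1 - q ^ (i+1))) * G (a+b) a = ∏ i ∈ range a, (1 - q ^ (b+i+1)) := by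
  intro a
  induction a with
  | zero => intro b; simp
  | succ a iha =>
    intro b
    induction b with
    | zero =>
      rw [Nat.add_zero, G_self, mul_one]
      simp
    | succ b ihb =>
      have pasc : G (a+1+(b+1)) (a+1) = G (a+1+b) (a+1) + q ^ (b+1) * G (a+1+b) a := by
        have := G_pascal' (a+b+1) a
        have e : a + b + 1 - a = b + 1 := by omega
        rw [e] at this
        have e2 : a + 1 + (b+1) = a + b + 1 + 1 := by omega
        have e3 : a + 1 + b = a + b + 1 := by omega
        rw [e2, e3, this]
      rw [pasc, mul_add, ihb]
      have key_a := iha (b+1)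
      -- second piece
      have piece2 : (∏ i ∈ range (a+1), (1 - q ^ (i+1))) * (q ^ (b+1) * G (a+1+b) a)
          = q^(b+1) * (1 - q^(a+1)) * ∏ i ∈ range a, (1 - q ^ (b+1+i+1)) := by
        rw [prod_range_succ]
        have e : a + 1 + b = a + (b+1) := by omega
        rw [e] at *
        calc (∏ i ∈ range a, (1 - q ^ (i+1))) * (1 - q^(a+1)) * (q ^ (b+1) * G (a+(b+1)) a)
            = q^(b+1) * (1 - q^(a+1)) * ((∏ i ∈ range a, (1 - q ^ (i+1))) * G (a+(b+1)) a) := by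
              ring
          _ = _ := by rw [iha (b+1)]
      rw [piece2]
      -- now pure product algebra
      rw [prod_range_succ (fun i => (1 - q ^ (b+1+i+1))) a]
      rw [prod_range_succ' (fun i => (1 - q ^ (b+i+1))) a]
      have e4 : ∀ i, b + (i+1) + 1 = b + 1 + i + 1 := by intro i; omega
      simp only [e4]
      have e5 : b + 0 + 1 = b + 1 := by omega
      rw [e5]
      have e6 : b + 1 + a + 1 = a + 1 + (b + 1) := by omega
      rw [e6, pow_add]
      ring

/-- `G` with integer second index, zero for negative index. -/
def Gz (n : ℕ) (k : ℤ) : P := if 0 ≤ k then G n k.toNat else 0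

@[simp] lemma Gz_natCast (n k : ℕ) : Gz n (k : ℤ) = G n k := by
  simp [Gz]

lemma Gz_neg {n : ℕ} {k : ℤ} (h : k < 0) : Gz n k = 0 := by
  simp [Gz, not_le.2 h]

lemma Gz_gt {n : ℕ} {k : ℤ} (h : (n : ℤ) < k) : Gz n k = 0 := by
  rw [Gz, if_pos (by omega)]
  exact G_eq_zero (by omega)

/-- the exponent `m(m-1)/2` as a natural number -/
def et (m : ℤ) : ℕ := (m * (m - 1) / 2).toNat

lemma two_et (m : ℤ) : 2 * (et m : ℤ) = m * (m - 1) := by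
  obtain ⟨c, hc⟩ := Int.even_mul_succ_self (m - 1)
  have hc' : m * (m - 1) = c + c := by linear_combination hc
  have hpos : 0 ≤ m * (m - 1) := by
    rcases le_or_gt 1 m with h | h
    · exact mul_nonneg (by omega) (by omega)
    · nlinarith
  rw [et, Int.toNat_of_nonneg (by omega), hc']
  omega

lemma et_cast (m : ℤ) : (et m : ℤ) = m * (m - 1) / 2 := by
  have h := two_et m
  generalize hp : m * (m - 1) = p at h ⊢
  omega

lemma et_step (m : ℤ) : (et (m + 1) : ℤ) = et m + m := by
  have h1 := two_et m
  have h2 := two_et (m + 1)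
  have h3 : (m + 1) * (m + 1 - 1) = m * (m - 1) + (m + m) := by ring
  omega

lemma et_abs (m : ℤ) : m.natAbs ≤ et m + 1 := by
  have h := two_et m
  have hb : 2 * (m.natAbs : ℤ) ≤ m * (m - 1) + 2 := by
    rcases le_or_gt 0 m with hm | hm
    · rw [Int.natAbs_of_nonneg hm]
      rcases le_or_gt m 1 with hm1 | hm1
      · interval_cases m <;> norm_num
      · nlinarith [mul_nonneg (show (0:ℤ) ≤ m - 1 by omega) (show (0:ℤ) ≤ m - 2 by omega)]
    · rw [Int.ofNat_natAbs_of_nonpos (by omega)]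
      nlinarith [mul_nonneg (show (0:ℤ) ≤ -m by omega) (show (0:ℤ) ≤ -m - 1 by omega)]
  omega

/-- sign `(-1)^m` -/
def ee (m : ℤ) : R := if Even m then 1 else -1

lemma ee_succ (m : ℤ) : ee (m + 1) = - ee m := by
  by_cases h : Even m <;>
    simp [ee, h, Int.even_add_one]

lemma ee_pred (m : ℤ) : ee (m - 1) = - ee m := by
  have := ee_succ (m - 1)
  rw [sub_add_cancel] at this
  rw [this]; ring

lemma ee_eq (m : ℤ) : ee m = (-1) ^ m.natAbs := by
  by_cases h : Even m
  · rw [ee, if_pos h, (Int.natAbs_even.2 h).neg_one_pow]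
  · rw [ee, if_neg h, (Int.natAbs_odd.2 (Int.not_even_iff_odd.1 h)).neg_one_pow]

/-- the summand of the theta sum -/
def sig (M : ℕ) (m : ℤ) : P := Gz (2*M) (M + m) * q ^ et m * Polynomial.C (ee m * T m)

lemma sig_eq_zero_lt {M : ℕ} {m : ℤ} (h : m < -(M:ℤ)) : sig M m = 0 := by
  rw [sig, Gz_neg (by omega), zero_mul, zero_mul]

lemma sig_eq_zero_gt {M : ℕ} {m : ℤ} (h : (M:ℤ) < m) : sig M m = 0 := by
  rw [sig, Gz_gt (by push_cast; omega), zero_mul, zero_mul]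

/-- integer-index double Pascal -/
lemma Gz_dp (M : ℕ) (m : ℤ) (h1 : -(M:ℤ) - 1 ≤ m) (h2 : m ≤ (M:ℤ) + 1) :
    Gz (2*M+2) (M+1+m) = q ^ (M+1+m).toNat * Gz (2*M) (M+1+m)
      + (1 + q ^ (2*M+1)) * Gz (2*M) (M+m) + q ^ (M+1-m).toNat * Gz (2*M) (M+m-1) := by
  rcases eq_or_lt_of_le h1 with rfl | h1'
  · -- m = -(M+1)
    have e1 : (M:ℤ) + 1 + (-(M:ℤ) - 1) = ((0:ℕ) : ℤ) := by norm_num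
    rw [e1, Gz_natCast, Gz_natCast, G_zero,
      Gz_neg (show (M:ℤ) + (-(M:ℤ)-1) < 0 by omega),
      Gz_neg (show (M:ℤ) + (-(M:ℤ)-1) - 1 < 0 by omega)]
    simp
  rcases eq_or_lt_of_le (show -(M:ℤ) ≤ m by omega) with rfl | h1''
  · -- m = -M
    have e1 : (M:ℤ) + 1 + (-(M:ℤ)) = ((1:ℕ) : ℤ) := by push_cast; ring
    have e2 : (M:ℤ) + (-(M:ℤ)) = ((0:ℕ) : ℤ) := by push_cast; ring
    have e2' : (M:ℤ) + (-(M:ℤ)) - 1 = -1 := by omega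
    rw [e2', Gz_neg (show (-1:ℤ) < 0 by omega), e1, e2, Gz_natCast, Gz_natCast, Gz_natCast, G_zero]
    have e3 : ((1:ℕ):ℤ).toNat = 1 := rfl
    rw [e3, G_dp1, pow_one]
    ring
  · -- -M + 1 ≤ m ≤ M + 1
    obtain ⟨k, hk⟩ : ∃ k : ℕ, (k : ℤ) = M + m - 1 := ⟨(M + m - 1).toNat, Int.toNat_of_nonneg (by omega)⟩
    have e1 : (M:ℤ) + 1 + m = ((k+2 : ℕ) : ℤ) := by push_cast; omega
    have e2 : (M:ℤ) + m = ((k+1 : ℕ) : ℤ) := by push_cast; omega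
    have e3 : (M:ℤ) + m - 1 = ((k : ℕ) : ℤ) := by omega
    have e4 : ((M:ℤ) + 1 + m).toNat = k + 2 := by omega
    have e5 : ((M:ℤ) + 1 - m).toNat = 2*M - k := by omega
    rw [e4, e5, e3, e2, e1, Gz_natCast, Gz_natCast, Gz_natCast, Gz_natCast]
    exact G_dp (2*M) k

lemma sum_shift (f : ℤ → P) (a b c : ℤ) :
    ∑ m ∈ Icc a b, f (m + c) = ∑ m ∈ Icc (a + c) (b + c), f m := by
  rw [← Finset.map_add_right_Icc a b c, Finset.sum_map]
  simp [addRightEmbedding_apply]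

lemma CT_mul_Tneg (m : ℤ) :
    Polynomial.C (ee (m+1) * T (m+1)) * Polynomial.C (T (-1) : R) = - Polynomial.C (ee m * T m) := by
  rw [← map_mul, ← map_neg]
  congr 1
  rw [ee_succ, mul_assoc, ← T_add]
  norm_num

lemma CT_mul_Tone (m : ℤ) :
    Polynomial.C (ee (m-1) * T (m-1)) * Polynomial.C (T 1 : R) = - Polynomial.C (ee m * T m) := by
  rw [← map_mul, ← map_neg]
  congr 1
  rw [ee_pred, mul_assoc, ← T_add]
  norm_num

theorem star : ∀ M : ℕ,
    (∏ n ∈ range M, ((1 - Polynomial.C (T (-1) : R) * q ^ (n+1)) * (1 - Polynomial.C (T 1 : R) * q ^ n)))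
      = ∑ m ∈ Icc (-(M:ℤ)) (M:ℤ), sig M m := by
  intro M
  induction M with
  | zero =>
    rw [Finset.range_zero, Finset.prod_empty]
    simp only [Nat.cast_zero, neg_zero, Finset.Icc_self, Finset.sum_singleton, sig]
    norm_num [Gz, et, ee, T_zero]
  | succ M ih =>
    rw [prod_range_succ, ih]
    have hI : ∀ m ∈ Icc (-(↑(M+1)):ℤ) (↑(M+1):ℤ), sig (M+1) m =
        (q ^ ((M:ℤ)+1+m).toNat * Gz (2*M) ((M:ℤ)+1+m) * q ^ et m * Polynomial.C (ee m * T m))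
        + ((1 + q^(2*M+1)) * sig M m)
        + (q ^ ((M:ℤ)+1-m).toNat * Gz (2*M) ((M:ℤ)+m-1) * q ^ et m * Polynomial.C (ee m * T m)) := by
      intro m hm
      rw [Finset.mem_Icc] at hm
      have hdp := Gz_dp M m (by push_cast at hm; omega) (by push_cast at hm; omega)
      simp only [sig]
      have h2 : 2*(M+1) = 2*M+2 := by ring
      have h3 : ((M+1 : ℕ) : ℤ) + m = (M:ℤ)+1+m := by push_cast; ring
      rw [h2, h3, hdp]
      ring
    rw [Finset.sum_congr rfl hI, Finset.sum_add_distrib, Finset.sum_add_distrib]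
    -- T1
    have hT1pt : ∀ m ∈ Icc (-(↑(M+1)):ℤ) (↑(M+1):ℤ),
        q ^ ((M:ℤ)+1+m).toNat * Gz (2*M) ((M:ℤ)+1+m) * q ^ et m * Polynomial.C (ee m * T m)
          = -(sig M (m+1) * (Polynomial.C (T (-1) : R) * q^(M+1))) := by
      intro m hm
      rw [Finset.mem_Icc] at hm
      have hmem : -(M:ℤ)-1 ≤ m := by push_cast at hm; omega
      have hexp : ((M:ℤ)+1+m).toNat + et m = et (m+1) + (M+1) := by
        have h := et_step m
        omega
      have hidx : (M:ℤ) + (m+1) = (M:ℤ)+1+m := by ring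
      calc q ^ ((M:ℤ)+1+m).toNat * Gz (2*M) ((M:ℤ)+1+m) * q ^ et m * Polynomial.C (ee m * T m)
          = Gz (2*M) ((M:ℤ)+1+m) * Polynomial.C (ee m * T m) * q ^ (((M:ℤ)+1+m).toNat + et m) := by
            rw [pow_add]; ring
        _ = Gz (2*M) ((M:ℤ)+1+m) * Polynomial.C (ee m * T m) * (q ^ (et (m+1)) * q ^ (M+1)) := by
            rw [hexp, pow_add]
        _ = -(sig M (m+1) * (Polynomial.C (T (-1) : R) * q^(M+1))) := by
            rw [sig, hidx]
            linear_combination (Gz (2*M) ((M:ℤ)+1+m) * q ^ (et (m+1)) * q ^ (M+1)) * CT_mul_Tneg m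
    -- T3
    have hT3pt : ∀ m ∈ Icc (-(↑(M+1)):ℤ) (↑(M+1):ℤ),
        q ^ ((M:ℤ)+1-m).toNat * Gz (2*M) ((M:ℤ)+m-1) * q ^ et m * Polynomial.C (ee m * T m)
          = -(sig M (m-1) * (Polynomial.C (T 1 : R) * q^M)) := by
      intro m hm
      rw [Finset.mem_Icc] at hm
      have hmem : m ≤ (M:ℤ)+1 := by push_cast at hm; omega
      have hexp : ((M:ℤ)+1-m).toNat + et m = et (m-1) + M := by
        have h := et_step (m-1)
        rw [sub_add_cancel] at h
        omega
      have hidx : (M:ℤ) + (m-1) = (M:ℤ)+m-1 := by ring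
      calc q ^ ((M:ℤ)+1-m).toNat * Gz (2*M) ((M:ℤ)+m-1) * q ^ et m * Polynomial.C (ee m * T m)
          = Gz (2*M) ((M:ℤ)+m-1) * Polynomial.C (ee m * T m) * q ^ (((M:ℤ)+1-m).toNat + et m) := by
            rw [pow_add]; ring
        _ = Gz (2*M) ((M:ℤ)+m-1) * Polynomial.C (ee m * T m) * (q ^ (et (m-1)) * q ^ M) := by
            rw [hexp, pow_add]
        _ = -(sig M (m-1) * (Polynomial.C (T 1 : R) * q^M)) := by
            rw [sig, hidx]
            linear_combination (Gz (2*M) ((M:ℤ)+m-1) * q ^ (et (m-1)) * q ^ M) * CT_mul_Tone m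
    rw [Finset.sum_congr rfl hT1pt, Finset.sum_congr rfl hT3pt]
    rw [Finset.sum_neg_distrib, Finset.sum_neg_distrib]
    -- shift the T1 sum
    have e1 : ∑ m ∈ Icc (-(↑(M+1)):ℤ) (↑(M+1):ℤ), sig M (m+1) * (Polynomial.C (T (-1) : R) * q^(M+1))
        = (∑ m ∈ Icc (-(M:ℤ)) (M:ℤ), sig M m) * (Polynomial.C (T (-1) : R) * q^(M+1)) := by
      rw [sum_shift (fun m => sig M m * (Polynomial.C (T (-1) : R) * q^(M+1)))]
      rw [show (-(↑(M+1)):ℤ) + 1 = -(M:ℤ) by push_cast; ring,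
          show ((↑(M+1)):ℤ) + 1 = (M:ℤ) + 2 by push_cast; ring]
      rw [← Finset.sum_subset (Finset.Icc_subset_Icc_right (by omega : (M:ℤ) ≤ (M:ℤ)+2))
        (fun x hx hnx => ?_), ← Finset.sum_mul]
      rw [Finset.mem_Icc] at hx; rw [Finset.mem_Icc] at hnx
      rw [sig_eq_zero_gt (by omega), zero_mul]
    have e3 : ∑ m ∈ Icc (-(↑(M+1)):ℤ) (↑(M+1):ℤ), sig M (m-1) * (Polynomial.C (T 1 : R) * q^M)
        = (∑ m ∈ Icc (-(M:ℤ)) (M:ℤ), sig M m) * (Polynomial.C (T 1 : R) * q^M) := by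
      simp only [sub_eq_add_neg]
      rw [sum_shift (fun m => sig M m * (Polynomial.C (T 1 : R) * q^M))]
      rw [show (-(↑(M+1)):ℤ) + (-1) = -(M:ℤ) - 2 by push_cast; ring,
          show ((↑(M+1)):ℤ) + (-1) = (M:ℤ) by push_cast; ring]
      rw [← Finset.sum_subset (Finset.Icc_subset_Icc_left (by omega : -(M:ℤ) - 2 ≤ -(M:ℤ)))
        (fun x hx hnx => ?_), ← Finset.sum_mul]
      rw [Finset.mem_Icc] at hx; rw [Finset.mem_Icc] at hnx
      rw [sig_eq_zero_lt (by omega), zero_mul]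
    have e2 : ∑ m ∈ Icc (-(↑(M+1)):ℤ) (↑(M+1):ℤ), (1 + q^(2*M+1)) * sig M m
        = (1 + q^(2*M+1)) * ∑ m ∈ Icc (-(M:ℤ)) (M:ℤ), sig M m := by
      rw [← Finset.sum_subset (Finset.Icc_subset_Icc (by push_cast; omega) (by push_cast; omega) :
            Icc (-(M:ℤ)) (M:ℤ) ⊆ Icc (-(↑(M+1)):ℤ) (↑(M+1):ℤ)) (fun x hx hnx => ?_),
          ← Finset.mul_sum]
      rw [Finset.mem_Icc] at hx; rw [Finset.mem_Icc] at hnx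
      push_cast at hx
      rcases (by omega : x < -(M:ℤ) ∨ (M:ℤ) < x) with h | h
      · rw [sig_eq_zero_lt h, mul_zero]
      · rw [sig_eq_zero_gt h, mul_zero]
    rw [e1, e2, e3]
    have hwz : Polynomial.C (T (-1) : R) * Polynomial.C (T 1 : R) = 1 := by
      rw [← map_mul, ← T_add]
      norm_num [T_zero]
    linear_combination ((∑ m ∈ Icc (-(M:ℤ)) (M:ℤ), sig M m) * q^(2*M+1)) * hwz

/-- Euler-type partial product `∏_{i<M} (1 - q^{i+1})`. -/
def D (M : ℕ) : P := ∏ i ∈ range M, (1 - q^(i+1))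

lemma prod_one_sub (s : Finset ℕ) (f : ℕ → ℕ) (c : ℕ) (h : ∀ i ∈ s, c ≤ f i) :
    ∃ E : P, ∏ i ∈ s, (1 - q^(f i)) = 1 + q^c * E := by
  classical
  induction s using Finset.cons_induction with
  | empty => exact ⟨0, by simp⟩
  | cons a s ha ih =>
    obtain ⟨E, hE⟩ := ih (fun i hi => h i (Finset.mem_cons_of_mem hi))
    have hfa : c ≤ f a := h a (Finset.mem_cons_self a s)
    obtain ⟨d, hd⟩ : ∃ d, f a = c + d := ⟨f a - c, by omega⟩
    refine ⟨E - q^d - q^d * q^c * E, ?_⟩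
    rw [Finset.prod_cons, hE, hd, pow_add]
    ring

lemma euler_unit (M : ℕ) (m : ℤ) (h1 : -(M:ℤ) ≤ m) (h2 : m ≤ (M:ℤ)) :
    ∃ E : P, D M * Gz (2*M) ((M:ℤ)+m) = 1 + q^(M - m.natAbs + 1) * E := by
  have hnA : m.natAbs ≤ M := by omega
  set a := M - m.natAbs with ha
  have hGz : Gz (2*M) ((M:ℤ)+m) = G (2*M) a := by
    rcases le_or_gt 0 m with hm | hm
    · have : ((M:ℤ)+m) = ((M + m.natAbs : ℕ) : ℤ) := by
        omega
      rw [this, Gz_natCast]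
      have := G_symm (2*M) (M + m.natAbs) (by omega)
      rw [this]
      congr 1
      omega
    · have : ((M:ℤ)+m) = ((M - m.natAbs : ℕ) : ℤ) := by
        omega
      rw [this, Gz_natCast]
  have hab : a + (M + m.natAbs) = 2*M := by omega
  have hkey := G_key a (M + m.natAbs)
  rw [hab] at hkey
  have hD : D M = (∏ i ∈ range a, (1 - q^(i+1))) * ∏ i ∈ Ico a M, (1 - q^(i+1)) := by
    rw [D, Finset.prod_range_mul_prod_Ico _ (by omega : a ≤ M)]
  have hsplit : D M * Gz (2*M) ((M:ℤ)+m)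
      = (∏ i ∈ range a, (1 - q^(M + m.natAbs + i+1))) * ∏ i ∈ Ico a M, (1 - q^(i+1)) := by
    rw [hGz, hD]
    calc (∏ i ∈ range a, (1 - q^(i+1))) * (∏ i ∈ Ico a M, (1 - q^(i+1))) * G (2*M) a
        = ((∏ i ∈ range a, (1 - q^(i+1))) * G (2*M) a) * ∏ i ∈ Ico a M, (1 - q^(i+1)) := by ring
      _ = _ := by rw [hkey]
  obtain ⟨E1, hE1⟩ := prod_one_sub (range a) (fun i => M + m.natAbs + i + 1) (a+1)
    (fun i hi => by beta_reduce; omega)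
  obtain ⟨E2, hE2⟩ := prod_one_sub (Ico a M) (fun i => i + 1) (a+1)
    (fun i hi => by beta_reduce; rw [Finset.mem_Ico] at hi; omega)
  refine ⟨E1 + E2 + q^(a+1) * E1 * E2, ?_⟩
  rw [hsplit, hE1, hE2]
  ring

lemma coeff_term (N M : ℕ) (hNM : N + 1 ≤ M) (m : ℤ) (h1 : -(M:ℤ) ≤ m) (h2 : m ≤ (M:ℤ)) :
    (D M * sig M m).coeff N = if et m = N then ee m * T m else 0 := by
  obtain ⟨E, hE⟩ := euler_unit M m h1 h2
  have hsig : D M * sig M m = Polynomial.C (ee m * T m) * q^(et m)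
      + (E * Polynomial.C (ee m * T m)) * q^(M - m.natAbs + 1 + et m) := by
    rw [sig]
    calc D M * (Gz (2*M) ((M:ℤ)+m) * q ^ et m * Polynomial.C (ee m * T m))
        = (D M * Gz (2*M) ((M:ℤ)+m)) * q ^ et m * Polynomial.C (ee m * T m) := by ring
      _ = (1 + q^(M - m.natAbs + 1) * E) * q ^ et m * Polynomial.C (ee m * T m) := by rw [hE]
      _ = _ := by rw [pow_add]; ring
  rw [hsig, Polynomial.coeff_add, Polynomial.coeff_C_mul, Polynomial.coeff_X_pow,
    Polynomial.coeff_mul_X_pow']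
  have hK : ¬ (M - m.natAbs + 1 + et m ≤ N) := by
    have := et_abs m
    omega
  rw [if_neg hK, add_zero]
  by_cases h : et m = N
  · rw [if_pos h, if_pos h.symm, mul_one]
  · rw [if_neg h, if_neg (fun hh => h hh.symm), mul_zero]

/-- the full partial product, as a polynomial -/
def Q (M : ℕ) : P := ∏ n ∈ range M,
  ((1 - q^(n+1)) * (1 - Polynomial.C (T (-1) : R) * q^(n+1)) * (1 - Polynomial.C (T 1 : R) * q^n))

lemma Q_eq (M : ℕ) : Q M = ∑ m ∈ Icc (-(M:ℤ)) (M:ℤ), D M * sig M m := by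
  rw [← Finset.mul_sum, ← star M, Q, D]
  rw [← Finset.prod_mul_distrib]
  exact Finset.prod_congr rfl (fun n _ => by ring)

lemma coeff_Q (N M : ℕ) (hNM : N + 1 ≤ M) :
    (Q M).coeff N = ∑ m ∈ Icc (-(M:ℤ)) (M:ℤ), (if et m = N then ee m * T m else 0) := by
  rw [Q_eq, Polynomial.finset_sum_coeff]
  refine Finset.sum_congr rfl (fun m hm => ?_)
  rw [Finset.mem_Icc] at hm
  exact coeff_term N M hNM m hm.1 hm.2
lemma Q_coe (M : ℕ) : ((Q M : P) : PowerSeries R) =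
    ∏ n ∈ Finset.range M,
      ((1 - (PowerSeries.monomial (R := R) (n + 1)) 1) *
       (1 - (PowerSeries.monomial (R := R) (n + 1)) (T (-1))) *
       (1 - (PowerSeries.monomial (R := R) n) (T 1))) := by
  rw [Q]
  rw [show (∏ n ∈ range M,
      ((1 - q^(n+1)) * (1 - Polynomial.C (T (-1) : R) * q^(n+1)) * (1 - Polynomial.C (T 1 : R) * q^n)) : P)
      = ∏ n ∈ range M,
      ((1 - Polynomial.monomial (n+1) (1:R)) * (1 - Polynomial.monomial (n+1) (T (-1) : R))
        * (1 - Polynomial.monomial n (T 1 : R))) from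
    Finset.prod_congr rfl (fun n _ => by
      rw [← Polynomial.C_mul_X_pow_eq_monomial, ← Polynomial.C_mul_X_pow_eq_monomial,
        ← Polynomial.C_mul_X_pow_eq_monomial, map_one, one_mul])]
  rw [show ((∏ n ∈ range M,
      ((1 - Polynomial.monomial (n+1) (1:R)) * (1 - Polynomial.monomial (n+1) (T (-1) : R))
        * (1 - Polynomial.monomial n (T 1 : R))) : P) : PowerSeries R)
      = ∏ n ∈ range M, (((1 - Polynomial.monomial (n+1) (1:R)) * (1 - Polynomial.monomial (n+1) (T (-1) : R))
        * (1 - Polynomial.monomial n (T 1 : R)) : P) : PowerSeries R) from by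
    simpa only [Polynomial.coeToPowerSeries.ringHom_apply] using
      map_prod (Polynomial.coeToPowerSeries.ringHom (R := R))
        (fun n => ((1 - Polynomial.monomial (n+1) (1:R)) * (1 - Polynomial.monomial (n+1) (T (-1) : R))
          * (1 - Polynomial.monomial n (T 1 : R)) : P)) (range M)]
  refine Finset.prod_congr rfl (fun n _ => ?_)
  push_cast
  rfl

theorem main (N M : ℕ) (hM : N + 1 ≤ M) :
    (PowerSeries.coeff (R := R) N)
      (∏ n ∈ Finset.range M,
        ((1 - (PowerSeries.monomial (R := R) (n + 1)) 1) *
         (1 - (PowerSeries.monomial (R := R) (n + 1)) (T (-1))) *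
         (1 - (PowerSeries.monomial (R := R) n) (T 1)))) =
    ∑ m ∈ Finset.Icc (-(N : ℤ) - 1) ((N : ℤ) + 1),
      if m * (m - 1) / 2 = N then ((-1) ^ m.natAbs : R) * T m else 0 := by
  rw [← Q_coe M, Polynomial.coeff_coe, coeff_Q N M hM]
  have hsub : Icc (-(N:ℤ)-1) ((N:ℤ)+1) ⊆ Icc (-(M:ℤ)) (M:ℤ) :=
    Finset.Icc_subset_Icc (by omega) (by omega)
  rw [← Finset.sum_subset hsub (fun x hx hnx => ?_)]
  · refine Finset.sum_congr rfl (fun m hm => ?_)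
    have hc := et_cast m
    by_cases h : et m = N
    · rw [if_pos h, if_pos (by omega), ee_eq]
    · rw [if_neg h, if_neg (by omega)]
  · rw [Finset.mem_Icc] at hx
    rw [Finset.mem_Icc] at hnx
    have h1 := et_abs x
    rw [if_neg (fun h => by omega)]

end

end JTP

/-- **Jacobi's triple product identity, formal form**, in the ring
`(ℤ[z,z⁻¹])[[q]]` of formal power series in `q` over the ring of Laurent
polynomials in `z` over `ℤ`.

The infinite product `∏_{n=1}^∞ (1 - q^n)(1 - q^n z⁻¹)(1 - q^(n-1) z)` converges in the
`(q)`-adic topology: the `n`-th factor is `1 + O(q^(n-1))`, so the coefficient of `q^N`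
in the partial products stabilizes as soon as at least `N + 1` factors are taken.  We
express the identity by saying that for every `N` and every partial product with
`M ≥ N + 1` factors, the coefficient of `q^N` of the partial product equals the
coefficient of `q^N` of the left-hand side `∑_{m ∈ ℤ} (-1)^m q^(m(m-1)/2) z^m`, namely
the (finite!) sum of `(-1)^m z^m` over the integers `m` with `m(m-1)/2 = N`; all such
`m` satisfy `-(N+1) ≤ m ≤ N+1`. -/
theorem jacobi_triple_product_formal (N M : ℕ) (hM : N + 1 ≤ M) :
    (PowerSeries.coeff (R := LaurentPolynomial ℤ) N)
      (∏ n ∈ Finset.range M,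
        ((1 - (PowerSeries.monomial (R := LaurentPolynomial ℤ) (n + 1)) 1) *
         (1 - (PowerSeries.monomial (R := LaurentPolynomial ℤ) (n + 1)) (T (-1))) *
         (1 - (PowerSeries.monomial (R := LaurentPolynomial ℤ) n) (T 1)))) =
    ∑ m ∈ Finset.Icc (-(N : ℤ) - 1) ((N : ℤ) + 1),
      if m * (m - 1) / 2 = N then ((-1) ^ m.natAbs : LaurentPolynomial ℤ) * T m else 0 :=
  JTP.main N M hM
end

section
/- Euler's pentagonal number theorem: in the formal power series ring ℤ[[q]], ∏_{n=1}^{∞} (1 - q^n) = ∑_{m ∈ ℤ} (-1)^m q^{m(3m-1)/2}, i.e. for every nonnegative integer N the coefficient of q^N in ∏_{n=1}^{∞}(1 - q^n) equals ∑ (-1)^m over those integers m with m(3m-1)/2 = N. -/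
open PowerSeries

namespace EulerPentagonal

open Finset

/-- Triangular numbers, defined without division. -/
def tri : ℕ → ℕ
  | 0 => 0
  | s + 1 => tri s + s + 1

lemma two_tri (s : ℕ) : 2 * tri s = s * (s + 1) := by
  induction s with
  | zero => rfl
  | succ s ih => show 2 * (tri s + s + 1) = _; rw [Nat.mul_add, Nat.mul_add, ih]; ring

/-- Partial product `∏_{j=s+1}^{n} (1 - X^j)`. -/
noncomputable def Qp (s n : ℕ) : PowerSeries ℤ :=
  ∏ j ∈ Finset.Ico s n, (1 - (PowerSeries.X : PowerSeries ℤ) ^ (j + 1))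

lemma Qp_self (n : ℕ) : Qp n n = 1 := by simp [Qp]

lemma Qp_top {s n : ℕ} (h : s ≤ n) :
    Qp s (n + 1) = Qp s n * (1 - (X : PowerSeries ℤ) ^ (n + 1)) := by
  simpa [Qp] using Finset.prod_Ico_succ_top h _

lemma Qp_bot {s n : ℕ} (h : s < n) :
    Qp s n = (1 - (X : PowerSeries ℤ) ^ (s + 1)) * Qp (s + 1) n := by
  simpa [Qp] using Finset.prod_eq_prod_Ico_succ_bot h _

/-- Shanks' partial sum. -/
noncomputable def ff (n : ℕ) : PowerSeries ℤ :=
  ∑ s ∈ Finset.range (n + 1), (-1 : PowerSeries ℤ) ^ s * Qp s n * X ^ (n * s + tri s)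

/-- The pentagonal-number side. -/
noncomputable def gg (n : ℕ) : PowerSeries ℤ :=
  ∑ s ∈ Finset.range (n + 1), (-1 : PowerSeries ℤ) ^ s * X ^ (s * s + tri s)
  + ∑ s ∈ Finset.range n, (-1 : PowerSeries ℤ) ^ (s + 1) * X ^ ((s + 1) * (s + 1) + tri s)

lemma ff_succ (n : ℕ) :
    ff (n + 1) = ff n + (-1 : PowerSeries ℤ) ^ (n + 1) * X ^ ((n + 1) * (n + 1) + tri n)
      + (-1 : PowerSeries ℤ) ^ (n + 1) * X ^ ((n + 1) * (n + 1) + tri (n + 1)) := by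
  have hA : ∑ s ∈ Finset.range (n + 1),
      (-1 : PowerSeries ℤ) ^ s * Qp s (n + 1) * X ^ ((n + 1) * s + tri s)
      = (∑ s ∈ Finset.range (n + 1),
          (-1 : PowerSeries ℤ) ^ s * Qp s n * X ^ ((n + 1) * s + tri s))
        - (∑ s ∈ Finset.range (n + 1),
          (-1 : PowerSeries ℤ) ^ s * Qp s n * X ^ ((n + 1) * (s + 1) + tri s)) := by
    rw [← Finset.sum_sub_distrib]
    refine Finset.sum_congr rfl fun s hs => ?_
    have hs' : s ≤ n := by simpa using Nat.lt_succ_iff.mp (Finset.mem_range.mp hs)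
    rw [Qp_top hs']
    have he : (n + 1) * (s + 1) + tri s = ((n + 1) * s + tri s) + (n + 1) := by ring
    rw [he, pow_add]
    ring
  have hD : (∑ s ∈ Finset.range (n + 1),
        (-1 : PowerSeries ℤ) ^ s * Qp s n * X ^ ((n + 1) * s + tri s))
      = ff n + ∑ t ∈ Finset.range n,
          (-1 : PowerSeries ℤ) ^ t * Qp t n * X ^ ((n + 1) * (t + 1) + tri t) := by
    have : (∑ s ∈ Finset.range (n + 1),
        ((-1 : PowerSeries ℤ) ^ s * Qp s n * X ^ ((n + 1) * s + tri s)
          - (-1 : PowerSeries ℤ) ^ s * Qp s n * X ^ (n * s + tri s)))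
        = ∑ t ∈ Finset.range n,
          (-1 : PowerSeries ℤ) ^ t * Qp t n * X ^ ((n + 1) * (t + 1) + tri t) := by
      rw [Finset.sum_range_succ']
      simp only [Nat.mul_zero, Nat.zero_add, sub_self]
      rw [add_zero]
      refine Finset.sum_congr rfl fun t ht => ?_
      have ht' : t < n := Finset.mem_range.mp ht
      have htri : tri (t + 1) = tri t + t + 1 := rfl
      have hq : Qp t n = (1 - (X : PowerSeries ℤ) ^ (t + 1)) * Qp (t + 1) n := Qp_bot ht'
      have he1 : (n + 1) * (t + 1) + tri (t + 1) = (n * (t + 1) + tri (t + 1)) + (t + 1) := by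
        ring
      have he2 : n * (t + 1) + tri (t + 1) = (n + 1) * (t + 1) + tri t := by
        rw [htri]; ring
      rw [he1, he2, pow_add, hq]
      ring
    calc (∑ s ∈ Finset.range (n + 1),
        (-1 : PowerSeries ℤ) ^ s * Qp s n * X ^ ((n + 1) * s + tri s))
        = ff n + ∑ s ∈ Finset.range (n + 1),
            ((-1 : PowerSeries ℤ) ^ s * Qp s n * X ^ ((n + 1) * s + tri s)
              - (-1 : PowerSeries ℤ) ^ s * Qp s n * X ^ (n * s + tri s)) := by
          rw [ff, ← Finset.sum_add_distrib]
          refine Finset.sum_congr rfl fun s hs => ?_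
          ring
      _ = _ := by rw [this]
  have hB : (∑ s ∈ Finset.range (n + 1),
        (-1 : PowerSeries ℤ) ^ s * Qp s n * X ^ ((n + 1) * (s + 1) + tri s))
      = (∑ t ∈ Finset.range n,
          (-1 : PowerSeries ℤ) ^ t * Qp t n * X ^ ((n + 1) * (t + 1) + tri t))
        + (-1 : PowerSeries ℤ) ^ n * X ^ ((n + 1) * (n + 1) + tri n) := by
    rw [Finset.sum_range_succ, Qp_self, mul_one]
  rw [ff, Finset.sum_range_succ, Qp_self, hA, hD, hB]
  have : ((-1 : PowerSeries ℤ)) ^ (n + 1) = -(-1 : PowerSeries ℤ) ^ n := by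
    rw [pow_succ]; ring
  rw [this]
  ring

lemma ff_eq_gg (n : ℕ) : ff n = gg n := by
  induction n with
  | zero => simp [ff, gg, Qp, tri]
  | succ n ih =>
    rw [ff_succ, ih]
    simp only [gg, Finset.sum_range_succ]
    ring

lemma coeff_term_high (N e : ℕ) (he : N < e) (p : PowerSeries ℤ) :
    (coeff (R := ℤ) N) (p * X ^ e) = 0 := by
  rw [coeff_mul_X_pow']
  simp [Nat.not_le.mpr he]

lemma coeff_ff (N : ℕ) : (coeff (R := ℤ) N) (ff N) = (coeff (R := ℤ) N) (Qp 0 N) := by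
  rw [ff, Finset.sum_range_succ', map_add, map_sum]
  have h0 : (-1 : PowerSeries ℤ) ^ 0 * Qp 0 N * X ^ (N * 0 + tri 0) = Qp 0 N := by
    simp [tri]
  rw [h0]
  have : ∀ t ∈ Finset.range N,
      (coeff (R := ℤ) N) ((-1 : PowerSeries ℤ) ^ (t + 1) * Qp (t + 1) N
        * X ^ (N * (t + 1) + tri (t + 1))) = 0 := by
    intro t ht
    apply coeff_term_high
    have h1 : N ≤ N * (t + 1) := Nat.le_mul_of_pos_right N (Nat.succ_pos t)
    have h2 : 0 < tri (t + 1) := by show 0 < tri t + t + 1; omega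
    omega
  rw [Finset.sum_eq_zero this, zero_add]

lemma coeff_Qp_stable (N n : ℕ) (hn : N ≤ n) :
    ∀ M, n ≤ M → ∀ p : PowerSeries ℤ, (coeff (R := ℤ) N) (p * Qp n M) = (coeff (R := ℤ) N) p := by
  intro M
  induction M with
  | zero => intro h p; interval_cases n; rw [Qp_self, mul_one]
  | succ M ihM =>
    intro h p
    rcases Nat.lt_or_ge n (M + 1) with h' | h'
    · have hnM : n ≤ M := Nat.lt_succ_iff.mp h'
      rw [Qp_top hnM, ← mul_assoc, mul_sub, mul_one, map_sub,
        coeff_term_high N (M + 1) (by omega), sub_zero, ihM hnM]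
    · have : n = M + 1 := le_antisymm h h'
      subst this
      rw [Qp_self, mul_one]

lemma coeff_Qp0 (N M : ℕ) (hM : N ≤ M) :
    (coeff (R := ℤ) N) (Qp 0 M) = (coeff (R := ℤ) N) (Qp 0 N) := by
  have : Qp 0 M = Qp 0 N * Qp N M := by
    rw [Qp, Qp, Qp, Finset.prod_Ico_consecutive _ (Nat.zero_le N) hM]
  rw [this, coeff_Qp_stable N N le_rfl M hM]

lemma coeff_neg_one_pow_mul (N s e : ℕ) :
    (coeff (R := ℤ) N) ((-1 : PowerSeries ℤ) ^ s * X ^ e)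
      = if e = N then (-1 : ℤ) ^ s else 0 := by
  have : ((-1 : PowerSeries ℤ)) ^ s = PowerSeries.C (R := ℤ) ((-1 : ℤ) ^ s) := by
    rw [map_pow, map_neg, map_one]
  rw [this, coeff_C_mul, coeff_X_pow]
  rcases eq_or_ne e N with rfl | h
  · simp
  · simp [h, Ne.symm h]

lemma even_key (m : ℤ) : ∃ j : ℤ, m * (3 * m - 1) = 2 * j := by
  rcases Int.even_or_odd m with ⟨k, hk⟩ | ⟨k, hk⟩
  · exact ⟨k * (3 * m - 1), by rw [hk]; ring⟩
  · exact ⟨m * (3 * k + 1), by rw [hk]; ring⟩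

lemma cond_iff (m : ℤ) (N : ℕ) (c : ℤ) (hc : m * (3 * m - 1) = 2 * c) :
    (m * (3 * m - 1) / 2 = N) ↔ c = N := by
  rw [hc, Int.mul_ediv_cancel_left _ two_ne_zero]

theorem main (N M : ℕ) (hM : N ≤ M) :
    (PowerSeries.coeff (R := ℤ) N)
      (∏ n ∈ Finset.range M, (1 - (PowerSeries.monomial (R := ℤ) (n + 1)) 1)) =
    ∑ m ∈ Finset.Icc (-(N : ℤ)) (N : ℤ),
      if m * (3 * m - 1) / 2 = N then (-1) ^ m.natAbs else 0 := by
  -- step 1: product equals Qp 0 M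
  have hprod : (∏ n ∈ Finset.range M, (1 - (PowerSeries.monomial (R := ℤ) (n + 1)) 1)) = Qp 0 M := by
    rw [Qp, Finset.range_eq_Ico]
    refine Finset.prod_congr rfl fun n _ => ?_
    rw [PowerSeries.X_pow_eq]
  rw [hprod, coeff_Qp0 N M hM, ← coeff_ff, ff_eq_gg]
  -- step 2: compute coefficient of gg N
  rw [gg, map_add, map_sum, map_sum]
  have hL : ∀ s ∈ Finset.range (N + 1),
      (coeff (R := ℤ) N) ((-1 : PowerSeries ℤ) ^ s * X ^ (s * s + tri s))
        = if s * s + tri s = N then (-1 : ℤ) ^ s else 0 := fun s _ =>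
    coeff_neg_one_pow_mul N s _
  have hR : ∀ s ∈ Finset.range N,
      (coeff (R := ℤ) N) ((-1 : PowerSeries ℤ) ^ (s + 1) * X ^ ((s + 1) * (s + 1) + tri s))
        = if (s + 1) * (s + 1) + tri s = N then (-1 : ℤ) ^ (s + 1) else 0 := fun s _ =>
    coeff_neg_one_pow_mul N (s + 1) _
  rw [Finset.sum_congr rfl hL, Finset.sum_congr rfl hR]
  -- step 3: decompose the Icc sum
  have hset : Finset.Icc (-(N : ℤ)) (N : ℤ)
      = (Finset.range (N + 1)).image (fun s : ℕ => -(s : ℤ))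
        ∪ (Finset.range N).image (fun s : ℕ => (s : ℤ) + 1) := by
    ext m
    simp only [Finset.mem_Icc, Finset.mem_union, Finset.mem_image, Finset.mem_range]
    constructor
    · rintro ⟨h1, h2⟩
      rcases le_or_gt m 0 with hm | hm
      · exact Or.inl ⟨m.natAbs, by omega, by omega⟩
      · exact Or.inr ⟨(m - 1).toNat, by omega, by omega⟩
    · rintro (⟨s, hs, rfl⟩ | ⟨s, hs, rfl⟩) <;> constructor <;> omega
  have hdisj : Disjoint ((Finset.range (N + 1)).image (fun s : ℕ => -(s : ℤ)))
      ((Finset.range N).image (fun s : ℕ => (s : ℤ) + 1)) := by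
    rw [Finset.disjoint_left]
    rintro m hm hm'
    simp only [Finset.mem_image, Finset.mem_range] at hm hm'
    obtain ⟨s, _, rfl⟩ := hm
    obtain ⟨t, _, h⟩ := hm'
    omega
  rw [hset, Finset.sum_union hdisj,
    Finset.sum_image (fun a _ b _ h => by omega),
    Finset.sum_image (fun a _ b _ h => by omega)]
  congr 1
  · refine Finset.sum_congr rfl fun s _ => ?_
    have key : (-(s : ℤ)) * (3 * (-(s : ℤ)) - 1) = 2 * ((s * s + tri s : ℕ) : ℤ) := by
      have htri : (2 * tri s : ℤ) = (s : ℤ) * ((s : ℤ) + 1) := by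
        exact_mod_cast congrArg (fun x : ℕ => (x : ℤ)) (two_tri s)
      push_cast
      linear_combination -htri
    have hcond : (-(s : ℤ)) * (3 * (-(s : ℤ)) - 1) / 2 = (N : ℤ) ↔ s * s + tri s = N := by
      rw [cond_iff _ N _ key]; exact Nat.cast_inj
    have habs : (-(s : ℤ)).natAbs = s := by omega
    rw [habs]
    exact (if_congr hcond rfl rfl).symm
  · refine Finset.sum_congr rfl fun s _ => ?_
    have key : ((s : ℤ) + 1) * (3 * ((s : ℤ) + 1) - 1)
        = 2 * (((s + 1) * (s + 1) + tri s : ℕ) : ℤ) := by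
      have htri : (2 * tri s : ℤ) = (s : ℤ) * ((s : ℤ) + 1) := by
        exact_mod_cast congrArg (fun x : ℕ => (x : ℤ)) (two_tri s)
      push_cast
      linear_combination -htri
    have hcond : ((s : ℤ) + 1) * (3 * ((s : ℤ) + 1) - 1) / 2 = (N : ℤ)
        ↔ (s + 1) * (s + 1) + tri s = N := by
      rw [cond_iff _ N _ key]; exact Nat.cast_inj
    have habs : ((s : ℤ) + 1).natAbs = s + 1 := by omega
    rw [habs]
    exact (if_congr hcond rfl rfl).symm

end EulerPentagonal

/-- **Euler's pentagonal number theorem** in `ℤ[[q]]`: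
`∏_{n=1}^∞ (1 - q^n) = ∑_{m ∈ ℤ} (-1)^m q^(m(3m-1)/2)`.

The infinite product converges in the `(q)`-adic topology: the `n`-th factor is
`1 + O(q^n)`, so the coefficient of `q^N` in the partial products stabilizes once at
least `N` factors are taken.  Hence the identity says: for every `N` and every `M ≥ N`,
the coefficient of `q^N` in `∏_{n=1}^M (1 - q^n)` equals `∑ (-1)^m` over those
(finitely many, at most two) integers `m` with `m(3m-1)/2 = N`; all such `m` satisfy
`-N ≤ m ≤ N`. -/
theorem euler_pentagonal_number_theorem (N M : ℕ) (hM : N ≤ M) :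
    (PowerSeries.coeff (R := ℤ) N)
      (∏ n ∈ Finset.range M, (1 - (PowerSeries.monomial (R := ℤ) (n + 1)) 1)) =
    ∑ m ∈ Finset.Icc (-(N : ℤ)) (N : ℤ),
      if m * (3 * m - 1) / 2 = N then (-1) ^ m.natAbs else 0 :=
  EulerPentagonal.main N M hM
end

section
/- Jacobi's identity for the cube of the Euler product (the Macdonald identity for the affine root system of type A_1, giving the power series expansion of η^3): in the formal power series ring ℤ[[q]], ∏_{n=1}^{∞} (1 - q^n)^3 = ∑_{m=0}^{∞} (-1)^m (2m+1) q^{m(m+1)/2}. -/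
open PowerSeries Finset

namespace JacobiAux

noncomputable section

abbrev A : Type := PowerSeries ℤ

lemma isUnit_em (n : ℕ) : IsUnit ((1 : A) - X ^ (n + 1)) := by
  rw [PowerSeries.isUnit_iff_constantCoeff]
  simp

def eu (n : ℕ) : Aˣ := (isUnit_em n).unit

lemma eu_val (n : ℕ) : (eu n : A) = 1 - X ^ (n + 1) := (isUnit_em n).unit_spec

def Du (m : ℕ) : Aˣ := ∏ n ∈ range m, eu n

def D (m : ℕ) : A := (Du m : A)

lemma Dcoe (m : ℕ) : ((Du m : Aˣ) : A) = D m := rfl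

lemma D_eq (m : ℕ) : D m = ∏ n ∈ range m, (1 - (X : A) ^ (n + 1)) := by
  simp [D, Du, Units.coeHom, eu_val]

lemma Du_succ (m : ℕ) : Du (m + 1) = Du m * eu m := prod_range_succ _ _

lemma D_succ (m : ℕ) : D (m + 1) = D m * (1 - X ^ (m + 1)) := by
  rw [D, Du_succ, Units.val_mul, eu_val, D]

lemma D_succ2 (m : ℕ) : D (m + 2) = D m * ((1 - X ^ (m + 1)) * (1 - X ^ (m + 2))) := by
  rw [show m + 2 = (m + 1) + 1 from rfl, D_succ, D_succ]; ring

def g (a b : ℕ) : A := ((Du (a + b) * (Du a)⁻¹ * (Du b)⁻¹ : Aˣ) : A)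

lemma g_mul_D (a b : ℕ) : g a b * D a * D b = D (a + b) := by
  rw [g, D, D, D, ← Units.val_mul, ← Units.val_mul]
  congr 1
  rw [mul_right_comm (Du (a + b) * (Du a)⁻¹) ((Du b)⁻¹) (Du a),
    inv_mul_cancel_right, inv_mul_cancel_right]

lemma g_symm (a b : ℕ) : g a b = g b a := by
  rw [g, g, add_comm a b, mul_right_comm]

lemma g_zero_right (a : ℕ) : g a 0 = 1 := by
  simp [g, Du]

lemma g_zero_left (b : ℕ) : g 0 b = 1 := by
  rw [g_symm, g_zero_right]

/-- the exponent `T_{k-M}` -/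
def e (M k : ℕ) : ℕ := if M ≤ k then (k - M + 1).choose 2 else (M - k).choose 2

lemma choose_two_succ (n : ℕ) : (n + 1).choose 2 = n.choose 2 + n := by
  rw [Nat.choose_succ_succ' n 1, Nat.choose_one_right]; ring

lemma eL1 (M k : ℕ) : e M (k + 1) + M = e M k + (k + 1) := by
  rcases le_or_gt M k with h | h
  · obtain ⟨j, rfl⟩ : ∃ j, k = M + j := ⟨k - M, by omega⟩
    rw [e, e, if_pos (by omega), if_pos h,
      show M + j + 1 - M + 1 = j + 2 by omega, show M + j - M + 1 = j + 1 by omega,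
      choose_two_succ (j + 1)]
    omega
  · rcases eq_or_lt_of_le (Nat.succ_le_of_lt h) with h2 | h2
    · rw [e, e, if_pos (by omega), if_neg (by omega), show k + 1 - M + 1 = 1 by omega,
        show M - k = 1 by omega]
      have : Nat.choose 1 2 = 0 := rfl
      omega
    · obtain ⟨t, rfl⟩ : ∃ t, M = k + 2 + t := ⟨M - (k + 2), by omega⟩
      rw [e, e, if_neg (by omega), if_neg (by omega),
        show k + 2 + t - (k + 1) = t + 1 by omega, show k + 2 + t - k = t + 2 by omega,
        choose_two_succ (t + 1)]
      omega

lemma e_shift (M k : ℕ) : e (M + 1) (k + 1) = e M k := by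
  rcases le_or_gt M k with h | h
  · rw [e, e, if_pos (by omega), if_pos h, show k + 1 - (M + 1) = k - M by omega]
  · rw [e, e, if_neg (by omega), if_neg (by omega), show M + 1 - (k + 1) = M - k by omega]

lemma e_diag (M : ℕ) : e M M = 0 := by simp [e]

lemma e_upper (M m : ℕ) : e M (M + m) = (m + 1).choose 2 := by
  rw [e, if_pos (by omega), show M + m - M + 1 = m + 1 by omega]

lemma e_lower (M k : ℕ) (h : k < M) : e M k = (M - k).choose 2 := by
  rw [e, if_neg (by omega)]

def c (M k : ℕ) : A := if k ≤ 2 * M then g k (2 * M - k) * X ^ (e M k) else 0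

/-- the central Pascal-type recurrence for `g`. -/
lemma G4 (k t : ℕ) :
    g (k + 2) (t + 2) = g (k + 1) (t + 1) + X ^ (k + 2) * g (k + 2) t
      + X ^ (t + 2) * g k (t + 2) + X ^ (k + t + 3) * g (k + 1) (t + 1) := by
  rw [← Units.mul_left_inj (Du (k + 2) * Du (t + 2)), Units.val_mul, Dcoe, Dcoe]
  have m1 : g (k + 2) (t + 2) * D (k + 2) * D (t + 2) = D (k + t + 2)
      * ((1 - X ^ (k + t + 3)) * (1 - X ^ (k + t + 4))) := by
    rw [g_mul_D, show k + 2 + (t + 2) = (k + t + 2) + 2 by ring, D_succ2,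
      show k + t + 2 + 1 = k + t + 3 by ring, show k + t + 2 + 2 = k + t + 4 by ring]
  have m2 : g (k + 1) (t + 1) * (D k * (1 - X ^ (k + 1))) * (D t * (1 - X ^ (t + 1)))
      = D (k + t + 2) := by
    rw [← D_succ, ← D_succ, g_mul_D, show k + 1 + (t + 1) = k + t + 2 by ring]
  have m3 : g (k + 2) t * (D k * ((1 - X ^ (k + 1)) * (1 - X ^ (k + 2)))) * D t
      = D (k + t + 2) := by
    rw [← D_succ2, g_mul_D, show k + 2 + t = k + t + 2 by ring]
  have m4 : g k (t + 2) * D k * (D t * ((1 - X ^ (t + 1)) * (1 - X ^ (t + 2))))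
      = D (k + t + 2) := by
    rw [← D_succ2, g_mul_D, show k + (t + 2) = k + t + 2 by ring]
  have d1 : D (k + 2) = D k * ((1 - X ^ (k + 1)) * (1 - X ^ (k + 2))) := D_succ2 k
  have d2 : D (t + 2) = D t * ((1 - X ^ (t + 1)) * (1 - X ^ (t + 2))) := D_succ2 t
  rw [d1, d2] at m1 ⊢
  linear_combination m1 - ((1 - X^(k+2)) * (1 - X^(t+2)) * (1 + X^(k+t+3))) * m2
    - (X^(k+2) * (1 - X^(t+1)) * (1 - X^(t+2))) * m3
    - (X^(t+2) * (1 - X^(k+1)) * (1 - X^(k+2))) * m4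

lemma D_zero : D 0 = 1 := by simp [D, Du]

lemma D_one : D 1 = 1 - X := by
  have h : D 1 = D 0 * (1 - X ^ (0 + 1)) := D_succ 0
  rw [h, D_zero, one_mul, zero_add, pow_one]

/-- edge recurrence for `g · 1`. -/
lemma G3 (k : ℕ) : g (k + 2) 1 = 1 + X ^ (k + 2) + X * g k 1 := by
  rw [← Units.mul_left_inj (Du (k + 2) * Du 1), Units.val_mul, Dcoe, Dcoe]
  have m1 : g (k + 2) 1 * (D k * ((1 - X ^ (k + 1)) * (1 - X ^ (k + 2)))) * D 1
      = D (k + 1) * ((1 - X ^ (k + 2)) * (1 - X ^ (k + 3))) := by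
    rw [← D_succ2, g_mul_D, show k + 2 + 1 = (k + 1) + 2 by ring, D_succ2,
      show k + 1 + 1 = k + 2 by ring, show k + 1 + 2 = k + 3 by ring]
  have m2 : g k 1 * D k * D 1 = D (k + 1) := g_mul_D k 1
  have d1 : D (k + 2) = D k * ((1 - X ^ (k + 1)) * (1 - X ^ (k + 2))) := D_succ2 k
  have dk : D (k + 1) = D k * (1 - X ^ (k + 1)) := D_succ k
  rw [d1]
  rw [D_one] at m1 m2 ⊢
  rw [dk] at m1 m2
  linear_combination m1 - (X * (1 - X ^ (k + 1)) * (1 - X ^ (k + 2))) * m2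

lemma g11 : g 1 1 = 1 + X := by
  rw [← Units.mul_left_inj (Du 1 * Du 1), Units.val_mul, Dcoe]
  have m : g 1 1 * D 1 * D 1 = D 2 := g_mul_D 1 1
  have d2 : D 2 = (1 - X) * (1 - X ^ 2) := by
    have h : D 2 = D 0 * ((1 - X ^ (0 + 1)) * (1 - X ^ (0 + 2))) := D_succ2 0
    rw [h, D_zero, one_mul, zero_add, zero_add, pow_one]
  rw [D_one] at m ⊢
  rw [d2] at m
  linear_combination m

/-- The main recurrence for the Cauchy-identity coefficients. -/
lemma key (M k : ℕ) :
    c (M + 1) (k + 2) = c M (k + 1) + X ^ M * c M (k + 2) + X ^ (M + 1) * c M k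
      + X ^ (2 * M + 1) * c M (k + 1) := by
  rcases show k + 2 ≤ 2 * M ∨ k + 1 = 2 * M ∨ k = 2 * M ∨ 2 * M < k by omega with h | h | h | h
  · -- main case
    obtain ⟨t, ht⟩ : ∃ t, 2 * M = k + 2 + t := ⟨2 * M - (k + 2), by omega⟩
    simp only [c]
    rw [if_pos (by omega : k + 2 ≤ 2 * (M + 1)), if_pos (by omega : k + 1 ≤ 2 * M),
      if_pos (by omega : k + 2 ≤ 2 * M), if_pos (by omega : k ≤ 2 * M),
      show 2 * (M + 1) - (k + 2) = t + 2 by omega, show 2 * M - (k + 1) = t + 1 by omega,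
      show 2 * M - (k + 2) = t by omega, show 2 * M - k = t + 2 by omega]
    have he : e (M + 1) (k + 2) = e M (k + 1) := e_shift M (k + 1)
    have r2 : M + e M (k + 2) = e M (k + 1) + (k + 2) := by
      have h2 : e M (k + 2) + M = e M (k + 1) + (k + 2) := eL1 M (k + 1)
      omega
    have r0 : M + 1 + e M k = e M (k + 1) + (t + 2) := by
      have := eL1 M k; omega
    have r4 : 2 * M + 1 + e M (k + 1) = e M (k + 1) + (k + t + 3) := by omega
    have pw2 : (X : A) ^ M * X ^ (e M (k + 2)) = X ^ (e M (k + 1)) * X ^ (k + 2) := by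
      rw [← pow_add, ← pow_add, r2]
    have pw0 : (X : A) ^ (M + 1) * X ^ (e M k) = X ^ (e M (k + 1)) * X ^ (t + 2) := by
      rw [← pow_add, ← pow_add, r0]
    have pw4 : (X : A) ^ (2 * M + 1) * X ^ (e M (k + 1))
        = X ^ (e M (k + 1)) * X ^ (k + t + 3) := by
      rw [← pow_add, ← pow_add, r4]
    rw [he]
    linear_combination (G4 k t) * (X : A) ^ (e M (k + 1)) - g (k + 2) t * pw2
      - g k (t + 2) * pw0 - g (k + 1) (t + 1) * pw4
  · -- k + 1 = 2M
    simp only [c]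
    rw [if_pos (by omega : k + 2 ≤ 2 * (M + 1)), if_pos (by omega : k + 1 ≤ 2 * M),
      if_neg (by omega : ¬ (k + 2 ≤ 2 * M)), if_pos (by omega : k ≤ 2 * M),
      show 2 * (M + 1) - (k + 2) = 1 by omega, show 2 * M - (k + 1) = 0 by omega,
      show 2 * M - k = 1 by omega, g_zero_right]
    have he : e (M + 1) (k + 2) = e M (k + 1) := e_shift M (k + 1)
    have r0 : M + 1 + e M k = e M (k + 1) + 1 := by
      have := eL1 M k; omega
    have r4 : 2 * M + 1 + e M (k + 1) = e M (k + 1) + (k + 2) := by omega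
    have pw0 : (X : A) ^ (M + 1) * X ^ (e M k) = X ^ (e M (k + 1)) * X ^ 1 := by
      rw [← pow_add, ← pow_add, r0]
    have pw4 : (X : A) ^ (2 * M + 1) * X ^ (e M (k + 1))
        = X ^ (e M (k + 1)) * X ^ (k + 2) := by
      rw [← pow_add, ← pow_add, r4]
    rw [he]
    linear_combination (G3 k) * (X : A) ^ (e M (k + 1)) - g k 1 * pw0 - pw4
  · -- k = 2M
    simp only [c]
    rw [if_pos (by omega : k + 2 ≤ 2 * (M + 1)), if_neg (by omega : ¬ (k + 1 ≤ 2 * M)),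
      if_neg (by omega : ¬ (k + 2 ≤ 2 * M)), if_pos (by omega : k ≤ 2 * M),
      show 2 * (M + 1) - (k + 2) = 0 by omega, show 2 * M - k = 0 by omega,
      g_zero_right, g_zero_right]
    have he : e (M + 1) (k + 2) = e M (k + 1) := e_shift M (k + 1)
    have r0 : M + 1 + e M k = e M (k + 1) := by
      have := eL1 M k; omega
    rw [he, ← r0, pow_add]
    ring
  · -- out of range
    simp only [c]
    rw [if_neg (by omega : ¬ (k + 2 ≤ 2 * (M + 1))), if_neg (by omega : ¬ (k + 1 ≤ 2 * M)),
      if_neg (by omega : ¬ (k + 2 ≤ 2 * M)), if_neg (by omega : ¬ (k ≤ 2 * M))]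
    ring

lemma key0 (M : ℕ) : c (M + 1) 0 = X ^ M * c M 0 := by
  simp only [c]
  rw [if_pos (by omega : 0 ≤ 2 * (M + 1)), if_pos (by omega : 0 ≤ 2 * M),
    Nat.sub_zero, Nat.sub_zero, g_zero_left, g_zero_left]
  have r : M + e M 0 = e (M + 1) 0 := by
    rcases M with _ | M'
    · decide
    · rw [e_lower (M' + 1) 0 (by omega), e_lower (M' + 1 + 1) 0 (by omega), Nat.sub_zero,
        Nat.sub_zero, choose_two_succ (M' + 1)]
      omega
  rw [← r, pow_add]
  ring

lemma key1 (M : ℕ) :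
    c (M + 1) 1 = c M 0 + X ^ M * c M 1 + X ^ (2 * M + 1) * c M 0 := by
  rcases M with _ | M'
  · -- M = 0
    simp only [c]
    norm_num
    rw [show e 1 1 = 0 by decide, show e 0 0 = 0 by decide, g_zero_left, g11, pow_zero]
    ring
  · -- M = M' + 1
    set M := M' + 1 with hM
    simp only [c]
    rw [if_pos (by omega : 1 ≤ 2 * (M + 1)), if_pos (by omega : 0 ≤ 2 * M),
      if_pos (by omega : 1 ≤ 2 * M), Nat.sub_zero,
      show 2 * (M + 1) - 1 = 2 * M' + 3 by omega, show 2 * M - 1 = 2 * M' + 1 by omega,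
      g_zero_left]
    have he : e (M + 1) 1 = e M 0 := e_shift M 0
    have r0 : M + e M 1 = e M 0 + 1 := by
      have h2 : e M 1 + M = e M 0 + 1 := eL1 M 0
      omega
    have r4 : 2 * M + 1 + e M 0 = e M 0 + (2 * M' + 3) := by omega
    have pw0 : (X : A) ^ M * X ^ (e M 1) = X ^ (e M 0) * X ^ 1 := by
      rw [← pow_add, ← pow_add, r0]
    have pw4 : (X : A) ^ (2 * M + 1) * X ^ (e M 0) = X ^ (e M 0) * X ^ (2 * M' + 3) := by
      rw [← pow_add, ← pow_add, r4]
    have hg1 : g 1 (2 * M' + 3) = g (2 * M' + 3) 1 := g_symm _ _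
    have hg2 : g 1 (2 * M' + 1) = g (2 * M' + 1) 1 := g_symm _ _
    have hG3 : g (2 * M' + 3) 1 = 1 + X ^ (2 * M' + 3) + X * g (2 * M' + 1) 1 := by
      have := G3 (2 * M' + 1)
      rw [show 2 * M' + 1 + 2 = 2 * M' + 3 by ring] at this
      exact this
    rw [he, hg1, hg2]
    linear_combination hG3 * (X : A) ^ (e M 0) - g (2 * M' + 1) 1 * pw0 - pw4

lemma c_top (M k : ℕ) (h : 2 * M < k) : c M k = 0 := by
  simp only [c]
  rw [if_neg (by omega)]

lemma c00 : c 0 0 = 1 := by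
  simp only [c]
  rw [if_pos (by omega)]
  norm_num
  rw [show e 0 0 = 0 by decide, pow_zero, g_zero_left, mul_one]

/-- abbreviation for the polynomial variable -/
noncomputable def Y : Polynomial A := Polynomial.X

noncomputable def CC : A →+* Polynomial A := Polynomial.C

lemma step (M : ℕ) :
    (∑ k ∈ range (2 * M + 1), CC (c M k) * Y ^ k)
        * ((1 + CC ((X : A) ^ (M + 1)) * Y) * (Y + CC ((X : A) ^ M)))
      = ∑ k ∈ range (2 * M + 3), CC (c (M + 1) k) * Y ^ k := by
  have hL : (∑ k ∈ range (2 * M + 1), CC (c M k) * Y ^ k)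
        * ((1 + CC ((X : A) ^ (M + 1)) * Y) * (Y + CC ((X : A) ^ M)))
      = (∑ k ∈ range (2 * M + 1), CC ((X : A) ^ M * c M k) * Y ^ k)
        + ((∑ k ∈ range (2 * M + 1), CC (c M k) * Y ^ (k + 1))
        + ((∑ k ∈ range (2 * M + 1), CC ((X : A) ^ (2 * M + 1) * c M k) * Y ^ (k + 1))
        + (∑ k ∈ range (2 * M + 1), CC ((X : A) ^ (M + 1) * c M k) * Y ^ (k + 2)))) := by
    rw [Finset.sum_mul, ← Finset.sum_add_distrib, ← Finset.sum_add_distrib,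
      ← Finset.sum_add_distrib]
    refine Finset.sum_congr rfl fun k _ => ?_
    have hx : CC ((X : A) ^ (2 * M + 1)) = CC ((X : A) ^ (M + 1)) * CC ((X : A) ^ M) := by
      rw [← map_mul, ← pow_add, show M + 1 + M = 2 * M + 1 by ring]
    rw [map_mul, map_mul, map_mul, hx]
    ring
  rw [hL]
  -- extension helper
  have hext : ∀ (u : A) (r : ℕ), (∑ k ∈ range (2 * M + 1), CC (u * c M k) * Y ^ (k + r))
      = ∑ k ∈ range (2 * M + 3), CC (u * c M k) * Y ^ (k + r) := by
    intro u r
    refine Finset.sum_subset (Finset.range_subset_range.mpr (by omega)) fun x hx hnx => ?_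
    rw [c_top M x (by simp only [Finset.mem_range] at hx hnx; omega), mul_zero, map_zero,
      zero_mul]
  have hext2 : ∀ (u : A) (r : ℕ), (∑ k ∈ range (2 * M + 1), CC (u * c M k) * Y ^ (k + r))
      = ∑ k ∈ range (2 * M + 2), CC (u * c M k) * Y ^ (k + r) := by
    intro u r
    refine Finset.sum_subset (Finset.range_subset_range.mpr (by omega)) fun x hx hnx => ?_
    rw [c_top M x (by simp only [Finset.mem_range] at hx hnx; omega), mul_zero, map_zero,
      zero_mul]
  -- A1 : bottom-peel twice
  have hA1 : (∑ k ∈ range (2 * M + 1), CC ((X : A) ^ M * c M k) * Y ^ k)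
      = (∑ k ∈ range (2 * M + 1), CC ((X : A) ^ M * c M (k + 2)) * Y ^ (k + 2))
        + CC ((X : A) ^ M * c M 1) * Y + CC ((X : A) ^ M * c M 0) := by
    rw [show (∑ k ∈ range (2 * M + 1), CC ((X : A) ^ M * c M k) * Y ^ k)
        = ∑ k ∈ range (2 * M + 3), CC ((X : A) ^ M * c M k) * Y ^ k from by
      have := hext ((X : A) ^ M) 0
      simpa only [Nat.add_zero] using this]
    rw [show (2 : ℕ) * M + 3 = (2 * M + 2) + 1 from rfl, Finset.sum_range_succ',
      show (2 : ℕ) * M + 2 = (2 * M + 1) + 1 from rfl, Finset.sum_range_succ']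
    simp only [show ∀ k : ℕ, k + 1 + 1 = k + 2 from fun _ => rfl, zero_add, pow_one, pow_zero,
      mul_one]
  -- A2
  have hA2 : (∑ k ∈ range (2 * M + 1), CC (c M k) * Y ^ (k + 1))
      = (∑ k ∈ range (2 * M + 1), CC (c M (k + 1)) * Y ^ (k + 2)) + CC (c M 0) * Y := by
    have h1 : (∑ k ∈ range (2 * M + 1), CC (c M k) * Y ^ (k + 1))
        = ∑ k ∈ range (2 * M + 2), CC (c M k) * Y ^ (k + 1) := by
      have := hext2 1 1
      simpa only [one_mul] using this
    rw [h1, show (2 : ℕ) * M + 2 = (2 * M + 1) + 1 from rfl, Finset.sum_range_succ']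
    simp only [show ∀ k : ℕ, k + 1 + 1 = k + 2 from fun _ => rfl, zero_add, pow_one]
  -- A3
  have hA3 : (∑ k ∈ range (2 * M + 1), CC ((X : A) ^ (2 * M + 1) * c M k) * Y ^ (k + 1))
      = (∑ k ∈ range (2 * M + 1), CC ((X : A) ^ (2 * M + 1) * c M (k + 1)) * Y ^ (k + 2))
        + CC ((X : A) ^ (2 * M + 1) * c M 0) * Y := by
    rw [hext2 ((X : A) ^ (2 * M + 1)) 1, show (2 : ℕ) * M + 2 = (2 * M + 1) + 1 from rfl,
      Finset.sum_range_succ']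
    simp only [show ∀ k : ℕ, k + 1 + 1 = k + 2 from fun _ => rfl, zero_add, pow_one]
  have hR : (∑ k ∈ range (2 * M + 3), CC (c (M + 1) k) * Y ^ k)
      = (∑ k ∈ range (2 * M + 1), CC (c (M + 1) (k + 2)) * Y ^ (k + 2))
        + CC (c (M + 1) 1) * Y + CC (c (M + 1) 0) := by
    rw [show (2 : ℕ) * M + 3 = (2 * M + 2) + 1 from rfl, Finset.sum_range_succ',
      show (2 : ℕ) * M + 2 = (2 * M + 1) + 1 from rfl, Finset.sum_range_succ']
    simp only [show ∀ k : ℕ, k + 1 + 1 = k + 2 from fun _ => rfl, zero_add, pow_one, pow_zero,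
      mul_one]
  rw [hA1, hA2, hA3, hR]
  have hkey : ∀ k, CC (c (M + 1) (k + 2)) * Y ^ (k + 2)
      = CC (c M (k + 1)) * Y ^ (k + 2) + CC ((X : A) ^ M * c M (k + 2)) * Y ^ (k + 2)
        + CC ((X : A) ^ (M + 1) * c M k) * Y ^ (k + 2)
        + CC ((X : A) ^ (2 * M + 1) * c M (k + 1)) * Y ^ (k + 2) := by
    intro k
    rw [key M k, map_add, map_add, map_add]
    ring
  rw [Finset.sum_congr rfl fun k _ => hkey k, key0 M, key1 M, map_add, map_add,
    Finset.sum_add_distrib, Finset.sum_add_distrib, Finset.sum_add_distrib]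
  ring

lemma cauchy (M : ℕ) :
    (∏ n ∈ range M, (1 + CC ((X : A) ^ (n + 1)) * Y))
        * (∏ n ∈ range M, (Y + CC ((X : A) ^ n)))
      = ∑ k ∈ range (2 * M + 1), CC (c M k) * Y ^ k := by
  induction M with
  | zero =>
      simp [c00]
  | succ M ih =>
      rw [prod_range_succ, prod_range_succ,
        show (∏ n ∈ range M, (1 + CC ((X : A) ^ (n + 1)) * Y)) * (1 + CC ((X : A) ^ (M + 1)) * Y)
            * ((∏ n ∈ range M, (Y + CC ((X : A) ^ n))) * (Y + CC ((X : A) ^ M)))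
          = (∏ n ∈ range M, (1 + CC ((X : A) ^ (n + 1)) * Y))
              * (∏ n ∈ range M, (Y + CC ((X : A) ^ n)))
              * ((1 + CC ((X : A) ^ (M + 1)) * Y) * (Y + CC ((X : A) ^ M))) from by ring,
        ih, step M, show 2 * (M + 1) + 1 = 2 * M + 3 by ring]

lemma ida (M : ℕ) :
    ∑ k ∈ range (2 * M + 3), (-1 : A) ^ k * (k : A) * c (M + 1) k
      = (-1) ^ (M + 1) * (D (M + 1) * D M) := by
  have h2 := congrArg (Polynomial.eval (-1 : A)) (congrArg Polynomial.derivative (cauchy (M + 1)))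
  -- evaluate the left-hand side
  have hP : Polynomial.eval (-1 : A) (∏ n ∈ range (M + 1), (1 + CC ((X : A) ^ (n + 1)) * Y))
      = D (M + 1) := by
    rw [Polynomial.eval_prod, D_eq]
    refine Finset.prod_congr rfl fun n _ => ?_
    simp only [Y, CC, Polynomial.eval_add, Polynomial.eval_one, Polynomial.eval_mul,
      Polynomial.eval_C, Polynomial.eval_X]
    ring
  have hQ0 : Polynomial.eval (-1 : A) (∏ n ∈ range (M + 1), (Y + CC ((X : A) ^ n))) = 0 := by
    rw [Polynomial.eval_prod]
    refine Finset.prod_eq_zero (Finset.mem_range.mpr (by omega : 0 < M + 1)) ?_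
    simp [Y, CC]
  have hQ' : Polynomial.eval (-1 : A)
      (Polynomial.derivative (∏ n ∈ range (M + 1), (Y + CC ((X : A) ^ n))))
      = (-1) ^ M * D M := by
    have hQsplit : (∏ n ∈ range (M + 1), (Y + CC ((X : A) ^ n)))
        = (∏ n ∈ range M, (Y + CC ((X : A) ^ (n + 1)))) * (Y + 1) := by
      rw [Finset.prod_range_succ', pow_zero, map_one]
    rw [hQsplit, Polynomial.derivative_mul, Polynomial.eval_add, Polynomial.eval_mul,
      Polynomial.eval_mul]
    have e1 : Polynomial.eval (-1 : A) (Y + 1) = 0 := by simp [Y]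
    have e2 : Polynomial.derivative (Y + (1 : Polynomial A)) = 1 := by
      simp [Y]
    rw [e1, mul_zero, zero_add, e2, Polynomial.eval_one, mul_one, Polynomial.eval_prod]
    have : ∀ n ∈ range M, Polynomial.eval (-1 : A) (Y + CC ((X : A) ^ (n + 1)))
        = -1 * (1 - X ^ (n + 1)) := by
      intro n _
      simp only [Y, CC, Polynomial.eval_add, Polynomial.eval_C, Polynomial.eval_X]
      ring
    rw [Finset.prod_congr rfl this, Finset.prod_mul_distrib, Finset.prod_const,
      Finset.card_range, D_eq]
  -- evaluate the right-hand side
  have hR : Polynomial.eval (-1 : A)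
      (Polynomial.derivative (∑ k ∈ range (2 * (M + 1) + 1), CC (c (M + 1) k) * Y ^ k))
      = ∑ k ∈ range (2 * (M + 1) + 1), c (M + 1) k * ((k : A) * (-1 : A) ^ (k - 1)) := by
    rw [Polynomial.derivative_sum, Polynomial.eval_finset_sum]
    refine Finset.sum_congr rfl fun k _ => ?_
    simp only [Y, CC, Polynomial.derivative_C_mul, Polynomial.derivative_X_pow,
      Polynomial.eval_mul, Polynomial.eval_C, Polynomial.eval_pow, Polynomial.eval_X]
  rw [Polynomial.derivative_mul, Polynomial.eval_add, Polynomial.eval_mul, Polynomial.eval_mul,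
    hP, hQ0, hQ', mul_zero, zero_add, hR] at h2
  have flip : ∀ k : ℕ, c (M + 1) k * ((k : A) * (-1 : A) ^ (k - 1))
      = -((-1 : A) ^ k * (k : A) * c (M + 1) k) := by
    intro k
    rcases k with _ | k'
    · simp
    · rw [show k' + 1 - 1 = k' from rfl, pow_succ, Nat.cast_succ]
      ring
  rw [Finset.sum_congr rfl fun k _ => flip k, Finset.sum_neg_distrib] at h2
  rw [show 2 * (M + 1) + 1 = 2 * M + 3 by ring] at h2
  have := h2.symm
  rw [neg_eq_iff_eq_neg] at this
  rw [this]
  ring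

lemma D_cong (m t : ℕ) : (X : A) ^ (m + 1) ∣ D (m + t) - D m := by
  induction t with
  | zero => simp
  | succ t ih =>
      have h1 : D (m + (t + 1)) - D m
          = (D (m + t) - D m) + (-(X ^ (m + t + 1)) * D (m + t)) := by
        rw [show m + (t + 1) = (m + t) + 1 from rfl, D_succ]
        ring
      rw [h1]
      exact dvd_add ih (dvd_mul_of_dvd_left (dvd_neg.mpr (pow_dvd_pow _ (by omega))) _)

lemma D_cong' (m m' n : ℕ) (h1 : n ≤ m) (h2 : n ≤ m') : (X : A) ^ (n + 1) ∣ D m' - D m := by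
  obtain ⟨t, rfl⟩ : ∃ t, m' = n + t := ⟨m' - n, by omega⟩
  obtain ⟨s, rfl⟩ : ∃ s, m = n + s := ⟨m - n, by omega⟩
  have := dvd_sub (D_cong n t) (D_cong n s)
  simpa using this

lemma Dg_cong (L a b n : ℕ) (hna : n ≤ a) (hnb : n ≤ b) (hnL : n ≤ L) :
    (X : A) ^ (n + 1) ∣ D L * g a b - 1 := by
  have ha : ((Du a)⁻¹ : Aˣ) * (D a : A) = 1 := Units.inv_mul _
  have hb : ((Du b)⁻¹ : Aˣ) * (D b : A) = 1 := Units.inv_mul _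
  have hg : g a b = D (a + b) * ((Du a)⁻¹ : Aˣ) * ((Du b)⁻¹ : Aˣ) := by
    rw [g, Units.val_mul, Units.val_mul, Dcoe]
  have h1 : D L * g a b - 1 = (((Du a)⁻¹ : Aˣ) * ((Du b)⁻¹ : Aˣ))
      * (D L * D (a + b) - D a * D b) := by
    linear_combination (D L) * hg + ((((Du b)⁻¹ : Aˣ) : A) * D b) * ha + hb
  rw [h1]
  refine dvd_mul_of_dvd_right ?_ _
  have h2 : D L * D (a + b) - D a * D b
      = (D L - D a) * D (a + b) + D a * (D (a + b) - D b) := by ring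
  rw [h2]
  exact dvd_add (dvd_mul_of_dvd_left (D_cong' a L n hna hnL) _)
    (dvd_mul_of_dvd_right (D_cong' b (a + b) n hnb (by omega)) _)

lemma coeff_DG (N L a b ee : ℕ) (hee : ee ≤ N → (N - ee ≤ a ∧ N - ee ≤ b ∧ N - ee ≤ L)) :
    (PowerSeries.coeff (R := ℤ) N) (D L * g a b * X ^ ee) = if ee = N then 1 else 0 := by
  rcases le_or_gt ee N with h | h
  · obtain ⟨d, rfl⟩ : ∃ d, N = d + ee := ⟨N - ee, by omega⟩
    rw [mul_comm (D L * g a b) (X ^ ee), PowerSeries.coeff_X_pow_mul]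
    obtain ⟨hda, hdb, hdL⟩ := hee h
    have hd : d = d + ee - ee := by omega
    have hdvd : (X : A) ^ (d + 1) ∣ D L * g a b - 1 :=
      Dg_cong L a b d (by omega) (by omega) (by omega)
    have hz : (PowerSeries.coeff (R := ℤ) d) (D L * g a b - 1) = 0 := by
      rw [PowerSeries.X_pow_dvd_iff] at hdvd
      exact hdvd d (by omega)
    have : (PowerSeries.coeff (R := ℤ) d) (D L * g a b)
        = (PowerSeries.coeff (R := ℤ) d) (1 : A) := by
      have := map_sub (PowerSeries.coeff (R := ℤ) d) (D L * g a b) 1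
      rw [hz] at this
      linarith [this]
    rw [this, PowerSeries.coeff_one]
    by_cases hd0 : d = 0
    · subst hd0; simp
    · rw [if_neg hd0, if_neg (by omega)]
  · rw [if_neg (by omega)]
    have hdvd : (X : A) ^ ee ∣ D L * g a b * X ^ ee := dvd_mul_left _ _
    rw [PowerSeries.X_pow_dvd_iff] at hdvd
    exact hdvd N h

lemma stab (N M t : ℕ) (h : N ≤ M) :
    (PowerSeries.coeff (R := ℤ) N) (D (M + t) ^ 3) = (PowerSeries.coeff (R := ℤ) N) (D M ^ 3) := by
  induction t with
  | zero => rfl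
  | succ t ih =>
      rw [← ih]
      have h1 : D (M + (t + 1)) ^ 3 - D (M + t) ^ 3
          = X ^ (M + t + 1) * (D (M + t) ^ 3
            * ((X ^ (M + t + 1)) ^ 2 - 3 * X ^ (M + t + 1) + 3) * (-1)) := by
        rw [show M + (t + 1) = (M + t) + 1 from rfl, D_succ]
        ring
      have h2 : (PowerSeries.coeff (R := ℤ) N) (D (M + (t + 1)) ^ 3 - D (M + t) ^ 3) = 0 := by
        rw [h1]
        have : (X : A) ^ (N + 1) ∣ X ^ (M + t + 1) * (D (M + t) ^ 3
            * ((X ^ (M + t + 1)) ^ 2 - 3 * X ^ (M + t + 1) + 3) * (-1)) :=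
          dvd_mul_of_dvd_left (pow_dvd_pow _ (by omega)) _
        rw [PowerSeries.X_pow_dvd_iff] at this
        exact this N (by omega)
      have := map_sub (PowerSeries.coeff (R := ℤ) N) (D (M + (t + 1)) ^ 3) (D (M + t) ^ 3)
      rw [h2] at this
      linarith [this]

lemma coeff_term (N k : ℕ) (hk : k ≤ 2 * (N + 2)) :
    (PowerSeries.coeff (R := ℤ) N) (D (N + 2) * c (N + 2) k)
      = if e (N + 2) k = N then 1 else 0 := by
  have hc : c (N + 2) k = g k (2 * (N + 2) - k) * X ^ (e (N + 2) k) := by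
    simp only [c]; rw [if_pos hk]
  rw [hc, ← mul_assoc]
  apply coeff_DG
  intro h
  rcases le_or_gt (N + 2) k with hkM | hkM
  · obtain ⟨j, rfl⟩ : ∃ j, k = (N + 2) + j := ⟨k - (N + 2), by omega⟩
    have he : e (N + 2) ((N + 2) + j) = (j + 1).choose 2 := e_upper (N + 2) j
    have hj : j ≤ (j + 1).choose 2 := by rw [choose_two_succ]; omega
    refine ⟨by omega, by omega, by omega⟩
  · have he : e (N + 2) k = ((N + 2) - k).choose 2 := e_lower (N + 2) k hkM
    have hm : (N + 2) - k ≤ ((N + 2) - k).choose 2 + 2 := by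
      rcases Nat.eq_zero_or_pos ((N + 2) - k) with h0 | h0
      · omega
      · obtain ⟨s, hs⟩ : ∃ s, (N + 2) - k = s + 1 := ⟨(N + 2) - k - 1, by omega⟩
        rw [hs, choose_two_succ]
        omega
    refine ⟨by omega, by omega, by omega⟩

lemma coeff_D3 (N : ℕ) :
    (PowerSeries.coeff (R := ℤ) N) (D (N + 2) ^ 3)
      = (-1 : ℤ) ^ (N + 2) * ∑ k ∈ range (2 * N + 5),
          (-1 : ℤ) ^ k * k * (if e (N + 2) k = N then 1 else 0) := by
  have hida := ida (N + 1)
  rw [show 2 * (N + 1) + 3 = 2 * N + 5 by ring, show (N + 1) + 1 = N + 2 from rfl] at hida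
  have hev : ((-1 : A)) ^ (N + 2) * (-1 : A) ^ (N + 2) = 1 := by
    rw [← pow_add]
    exact Even.neg_one_pow ⟨N + 2, by ring⟩
  have hsub : D (N + 2) * D (N + 1)
      = (-1 : A) ^ (N + 2) * ∑ k ∈ range (2 * N + 5), (-1 : A) ^ k * k * c (N + 2) k := by
    rw [hida, ← mul_assoc, hev, one_mul]
  have hcube : D (N + 2) ^ 3
      = (D (N + 2) * (D (N + 2) * D (N + 1))) - X ^ (N + 2) * (D (N + 2) ^ 2 * D (N + 1)) := by
    have h2 : D (N + 2) = D (N + 1) * (1 - X ^ (N + 2)) := D_succ (N + 1)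
    rw [h2]
    ring
  rw [hcube, map_sub]
  have hz : (PowerSeries.coeff (R := ℤ) N) (X ^ (N + 2) * (D (N + 2) ^ 2 * D (N + 1))) = 0 := by
    have : (X : A) ^ (N + 2) ∣ X ^ (N + 2) * (D (N + 2) ^ 2 * D (N + 1)) := dvd_mul_right _ _
    rw [PowerSeries.X_pow_dvd_iff] at this
    exact this N (by omega)
  rw [hz, sub_zero, hsub]
  have hrearr : D (N + 2) * ((-1 : A) ^ (N + 2)
        * ∑ k ∈ range (2 * N + 5), (-1 : A) ^ k * k * c (N + 2) k)
      = ∑ k ∈ range (2 * N + 5),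
          ((-1 : A) ^ (N + 2) * ((-1 : A) ^ k * k)) * (D (N + 2) * c (N + 2) k) := by
    rw [Finset.mul_sum, Finset.mul_sum]
    exact Finset.sum_congr rfl fun k _ => by ring
  rw [hrearr, map_sum, Finset.mul_sum]
  refine Finset.sum_congr rfl fun k hk => ?_
  have hcast : ((-1 : A) ^ (N + 2) * ((-1 : A) ^ k * k))
      = PowerSeries.C (R := ℤ) ((-1) ^ (N + 2) * ((-1) ^ k * k)) := by
    rw [map_mul, map_mul, map_pow, map_pow, map_neg, map_one, map_natCast]
  rw [hcast, PowerSeries.coeff_C_mul,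
    coeff_term N k (by simp only [Finset.mem_range] at hk; omega)]
  ring

lemma final_sum (N : ℕ) :
    (-1 : ℤ) ^ (N + 2) * ∑ k ∈ range (2 * N + 5),
        (-1 : ℤ) ^ k * k * (if e (N + 2) k = N then 1 else 0)
      = ∑ m ∈ range (N + 1),
          if m * (m + 1) / 2 = N then (-1) ^ m * (2 * (m : ℤ) + 1) else 0 := by
  rw [show 2 * N + 5 = (N + 2) + (N + 3) by ring, Finset.sum_range_add,
    ← Finset.sum_range_reflect
      (fun j => (-1 : ℤ) ^ j * (j : ℤ) * (if e (N + 2) j = N then (1 : ℤ) else 0)) (N + 2)]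
  have htop := Finset.sum_range_succ
    (fun i => (-1 : ℤ) ^ (N + 2 + i) * ((N + 2 + i : ℕ) : ℤ)
      * (if e (N + 2) (N + 2 + i) = N then (1 : ℤ) else 0)) (N + 2)
  rw [htop]
  have hne : e (N + 2) (N + 2 + (N + 2)) ≠ N := by
    rw [e_upper (N + 2) (N + 2)]
    have h1 := choose_two_succ (N + 2)
    omega
  rw [if_neg hne, mul_zero, add_zero, ← Finset.sum_add_distrib, Finset.mul_sum]
  have hterm : ∀ i ∈ range (N + 2),
      (-1 : ℤ) ^ (N + 2) * ((-1 : ℤ) ^ (N + 2 - 1 - i) * ((N + 2 - 1 - i : ℕ) : ℤ)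
          * (if e (N + 2) (N + 2 - 1 - i) = N then (1 : ℤ) else 0)
        + (-1 : ℤ) ^ (N + 2 + i) * ((N + 2 + i : ℕ) : ℤ)
          * (if e (N + 2) (N + 2 + i) = N then (1 : ℤ) else 0))
      = if (i + 1).choose 2 = N then (-1) ^ i * (2 * (i : ℤ) + 1) else 0 := by
    intro i hi
    have hiN : i < N + 2 := Finset.mem_range.mp hi
    have he1 : e (N + 2) (N + 2 - 1 - i) = (i + 1).choose 2 := by
      rw [e_lower (N + 2) (N + 2 - 1 - i) (by omega),
        show (N + 2) - (N + 2 - 1 - i) = i + 1 by omega]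
    have he2 : e (N + 2) (N + 2 + i) = (i + 1).choose 2 := e_upper (N + 2) i
    obtain ⟨d, hd⟩ : ∃ d, N + 2 - 1 - i = d := ⟨N + 2 - 1 - i, rfl⟩
    have hdi : d + i + 1 = N + 2 := by omega
    rw [he1, he2, hd]
    have hs1 : (-1 : ℤ) ^ (N + 2) * (-1 : ℤ) ^ d = -(-1 : ℤ) ^ i := by
      rw [← pow_add, show N + 2 + d = 2 * d + (i + 1) by omega, pow_add, pow_mul,
        neg_one_sq, one_pow, pow_succ]
      ring
    have hs2 : (-1 : ℤ) ^ (N + 2) * (-1 : ℤ) ^ (N + 2 + i) = (-1 : ℤ) ^ i := by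
      rw [← pow_add, show N + 2 + (N + 2 + i) = 2 * (N + 2) + i by omega, pow_add, pow_mul,
        neg_one_sq, one_pow, one_mul]
    have hcast : ((N + 2 + i : ℕ) : ℤ) = 2 * (i : ℤ) + (d : ℤ) + 1 := by
      push_cast
      omega
    rw [hcast]
    by_cases hif : (i + 1).choose 2 = N
    · rw [if_pos hif, if_pos hif, mul_one, mul_one]
      linear_combination (d : ℤ) * hs1 + (2 * (i : ℤ) + (d : ℤ) + 1) * hs2
    · rw [if_neg hif, if_neg hif]
      ring
  rw [Finset.sum_congr rfl hterm, Finset.sum_range_succ]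
  have hlast : ¬ ((N + 1 + 1).choose 2 = N) := by
    have h1 := choose_two_succ (N + 1)
    omega
  rw [if_neg hlast, add_zero]
  refine Finset.sum_congr rfl fun i _ => ?_
  have hcond : (i + 1).choose 2 = i * (i + 1) / 2 := by
    rw [Nat.choose_two_right, Nat.add_sub_cancel, mul_comm]
  rw [hcond]

end

end JacobiAux

open PowerSeries

/-- **Jacobi's identity for the cube of the Euler product** (the Macdonald identity for
the affine root system of type `A₁`, the expansion of `η³`): in `ℤ[[q]]`,
`∏_{n=1}^∞ (1 - q^n)³ = ∑_{m=0}^∞ (-1)^m (2m+1) q^(m(m+1)/2)`.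

The infinite product converges in the `(q)`-adic topology: the `n`-th factor is
`1 + O(q^n)`, so the coefficient of `q^N` in the partial products stabilizes once at
least `N` factors are taken.  Hence the identity says: for every `N` and every `M ≥ N`,
the coefficient of `q^N` in `∏_{n=1}^M (1 - q^n)³` equals `(-1)^m (2m+1)` summed over
the (at most one, since triangular numbers are pairwise distinct) natural numbers `m`
with `m(m+1)/2 = N`; any such `m` satisfies `m ≤ N`. -/
theorem jacobi_cube_euler_product (N M : ℕ) (hM : N ≤ M) :
    (PowerSeries.coeff (R := ℤ) N)
      (∏ n ∈ Finset.range M, (1 - (PowerSeries.monomial (R := ℤ) (n + 1)) 1) ^ 3) =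
    ∑ m ∈ Finset.range (N + 1),
      if m * (m + 1) / 2 = N then (-1) ^ m * (2 * (m : ℤ) + 1) else 0 := by
  have h1 : JacobiAux.D M = ∏ n ∈ Finset.range M, (1 - (PowerSeries.monomial (R := ℤ) (n + 1)) 1) := by
    rw [JacobiAux.D_eq]
    exact Finset.prod_congr rfl fun n _ => by rw [PowerSeries.X_pow_eq]
  rw [Finset.prod_pow, ← h1]
  have h2 : (PowerSeries.coeff (R := ℤ) N) (JacobiAux.D M ^ 3)
      = (PowerSeries.coeff (R := ℤ) N) (JacobiAux.D (N + 2) ^ 3) := by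
    calc (PowerSeries.coeff (R := ℤ) N) (JacobiAux.D M ^ 3)
        = (PowerSeries.coeff (R := ℤ) N) (JacobiAux.D (M + (N + 2)) ^ 3) :=
          (JacobiAux.stab N M (N + 2) hM).symm
      _ = (PowerSeries.coeff (R := ℤ) N) (JacobiAux.D ((N + 2) + M) ^ 3) := by
          rw [Nat.add_comm M (N + 2)]
      _ = (PowerSeries.coeff (R := ℤ) N) (JacobiAux.D (N + 2) ^ 3) :=
          JacobiAux.stab N (N + 2) M (by omega)
  rw [h2, JacobiAux.coeff_D3, JacobiAux.final_sum]
end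

section
/- Dyson's constant term identity (the Macdonald constant term conjecture for the root system of type A_{n-1}): for all positive integers n and all nonnegative integers k, the constant term (the coefficient of the monomial x_1^0 ⋯ x_n^0) of the Laurent polynomial ∏_{1 ≤ i < j ≤ n} (1 - x_i x_j^{-1})^k (1 - x_j x_i^{-1})^k in the ring of Laurent polynomials in n variables over ℚ equals (nk)! / (k!)^n. -/
open AddMonoidAlgebra Finset

namespace DysonAux

variable {n : ℕ}

/-- The Laurent polynomial ring in `n` variables. -/
abbrev R (n : ℕ) := AddMonoidAlgebra ℚ (Fin n → ℤ)

/-- The monomial `x^v`. -/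
noncomputable def X (v : Fin n → ℤ) : R n := AddMonoidAlgebra.single v 1

lemma X_mul (u v : Fin n → ℤ) : X u * X v = X (u + v) := by
  simp [X, AddMonoidAlgebra.single_mul_single]

lemma X_zero : X (0 : Fin n → ℤ) = 1 := rfl

lemma X_ne_zero (v : Fin n → ℤ) : X v ≠ 0 := by
  simp [X, AddMonoidAlgebra.single_eq_zero]

/-- The `i`-th basis vector. -/
def e (i : Fin n) : Fin n → ℤ := Pi.single i 1

lemma e_apply_self (i : Fin n) : e i i = 1 := by simp [e]

lemma e_apply_ne {i j : Fin n} (h : j ≠ i) : e i j = 0 := by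
  simp [e, Pi.single_eq_of_ne h]

lemma e_inj : Function.Injective (e (n := n)) := by
  intro i j h
  by_contra hne
  have h1 : e i i = e j i := by rw [h]
  rw [e_apply_self, e_apply_ne (Ne.symm (fun hh => hne hh.symm))] at h1
  exact one_ne_zero h1

/-- The Dyson product over index set `S` with exponents `a`. -/
noncomputable def D (S : Finset (Fin n)) (a : Fin n → ℕ) : R n :=
  ∏ p ∈ (S ×ˢ S).filter (fun p => p.1 ≠ p.2), (1 - X (e p.1 - e p.2)) ^ (a p.1)

/-! ### Support lemmas -/

/-- All monomials of `f` have `j`-th exponent `< 0`. -/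
def NegAt (j : Fin n) (f : R n) : Prop := ∀ v ∈ f.coeff.support, v j < 0

/-- All monomials of `f` have `j`-th exponent `= 0`. -/
def ZeroAt (j : Fin n) (f : R n) : Prop := ∀ v ∈ f.coeff.support, v j = 0

lemma negAt_zero (j : Fin n) : NegAt j (0 : R n) := by
  intro v hv; simp at hv

lemma negAt_add {j : Fin n} {f g : R n} (hf : NegAt j f) (hg : NegAt j g) :
    NegAt j (f + g) := by
  intro v hv
  rw [AddMonoidAlgebra.coeff_add] at hv
  rcases Finset.mem_union.1 (Finsupp.support_add hv) with h | h
  · exact hf v h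
  · exact hg v h

lemma negAt_mul {j : Fin n} {f g : R n} (hf : NegAt j f)
    (hg : ∀ v ∈ g.coeff.support, v j ≤ 0) : NegAt j (f * g) := by
  intro v hv
  obtain ⟨u, hu, w, hw, rfl⟩ := Finset.mem_add.1 (AddMonoidAlgebra.support_coeff_mul_subset f g hv)
  have : (u + w) j = u j + w j := rfl
  rw [this]
  exact add_neg_of_neg_of_nonpos (hf u hu) (hg w hw)

lemma negAt_neg_X {j : Fin n} {w : Fin n → ℤ} (hw : w j < 0) : NegAt j (-X w) := by
  intro v hv
  rw [AddMonoidAlgebra.coeff_neg, Finsupp.support_neg, X, AddMonoidAlgebra.coeff_single] at hv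
  have := Finsupp.support_single_subset (a := w) (b := (1:ℚ)) hv
  simp only [Finset.mem_singleton] at this
  subst this; exact hw

/-- `f` is `1` plus an element all of whose monomials have `j`-th exponent `< 0`. -/
def Good (j : Fin n) (f : R n) : Prop := ∃ C, f = 1 + C ∧ NegAt j C

lemma good_one (j : Fin n) : Good j 1 := ⟨0, by rw [add_zero], negAt_zero j⟩

lemma negAt_le {j : Fin n} {f : R n} (hf : NegAt j f) : ∀ v ∈ f.coeff.support, v j ≤ 0 :=
  fun v hv => le_of_lt (hf v hv)

lemma good_mul {j : Fin n} {f g : R n} (hf : Good j f) (hg : Good j g) :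
    Good j (f * g) := by
  obtain ⟨C, rfl, hC⟩ := hf
  obtain ⟨C', rfl, hC'⟩ := hg
  refine ⟨C + C' + C * C', by ring, ?_⟩
  exact negAt_add (negAt_add hC hC') (negAt_mul hC (negAt_le hC'))

lemma good_factor {j : Fin n} {i : Fin n} (hij : i ≠ j) :
    Good j (1 - X (e i - e j) : R n) := by
  refine ⟨-X (e i - e j), by ring, negAt_neg_X ?_⟩
  have : (e i - e j) j = e i j - e j j := rfl
  rw [this, e_apply_ne (Ne.symm hij), e_apply_self]
  norm_num

lemma good_pow {j : Fin n} {f : R n} (hf : Good j f) (m : ℕ) : Good j (f ^ m) := by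
  induction m with
  | zero => simpa using good_one j
  | succ m ih => rw [pow_succ]; exact good_mul ih hf

lemma good_prod {j : Fin n} {ι : Type*} (s : Finset ι) (F : ι → R n)
    (h : ∀ i ∈ s, Good j (F i)) : Good j (∏ i ∈ s, F i) := by
  classical
  induction s using Finset.induction with
  | empty => simpa using good_one j
  | insert x s hx ih =>
    rw [Finset.prod_insert hx]
    exact good_mul (h _ (Finset.mem_insert_self _ _))
      (ih fun i hi => h i (Finset.mem_insert_of_mem hi))

lemma zeroAt_one (j : Fin n) : ZeroAt j (1 : R n) := by
  intro v hv
  rw [AddMonoidAlgebra.one_def, AddMonoidAlgebra.coeff_single] at hv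
  have := Finsupp.support_single_subset (a := (0 : Fin n → ℤ)) (b := (1:ℚ)) hv
  simp only [Finset.mem_singleton] at this
  subst this; rfl

lemma zeroAt_sub {j : Fin n} {f g : R n} (hf : ZeroAt j f) (hg : ZeroAt j g) :
    ZeroAt j (f - g) := by
  intro v hv
  rw [AddMonoidAlgebra.coeff_sub] at hv
  rcases Finset.mem_union.1 (Finsupp.support_sub hv) with h | h
  · exact hf v h
  · exact hg v h

lemma zeroAt_mul {j : Fin n} {f g : R n} (hf : ZeroAt j f) (hg : ZeroAt j g) :
    ZeroAt j (f * g) := by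
  intro v hv
  obtain ⟨u, hu, w, hw, rfl⟩ := Finset.mem_add.1 (AddMonoidAlgebra.support_coeff_mul_subset f g hv)
  have : (u + w) j = u j + w j := rfl
  rw [this, hf u hu, hg w hw, add_zero]

lemma zeroAt_X {j : Fin n} {w : Fin n → ℤ} (hw : w j = 0) : ZeroAt j (X w) := by
  intro v hv
  rw [X, AddMonoidAlgebra.coeff_single] at hv
  have := Finsupp.support_single_subset (a := w) (b := (1:ℚ)) hv
  simp only [Finset.mem_singleton] at this
  subst this; exact hw

lemma zeroAt_pow {j : Fin n} {f : R n} (hf : ZeroAt j f) (m : ℕ) : ZeroAt j (f ^ m) := by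
  induction m with
  | zero => simpa using zeroAt_one j
  | succ m ih => rw [pow_succ]; exact zeroAt_mul ih hf

lemma zeroAt_D {j : Fin n} (S : Finset (Fin n)) (hj : j ∉ S) (a : Fin n → ℕ) :
    ZeroAt j (D S a) := by
  classical
  refine Finset.prod_induction _ (ZeroAt j) (fun f g => zeroAt_mul) (zeroAt_one j) ?_
  intro p hp
  simp only [Finset.mem_filter, Finset.mem_product] at hp
  apply zeroAt_pow
  apply zeroAt_sub (zeroAt_one j)
  apply zeroAt_X
  have h1 : p.1 ≠ j := fun h => hj (h ▸ hp.1.1)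
  have h2 : p.2 ≠ j := fun h => hj (h ▸ hp.1.2)
  have : (e p.1 - e p.2) j = e p.1 j - e p.2 j := rfl
  rw [this, e_apply_ne (Ne.symm h1), e_apply_ne (Ne.symm h2), sub_zero]

lemma D_split (S : Finset (Fin n)) (a : Fin n → ℕ) {j : Fin n} (hj : j ∈ S) :
    D S a = (∏ i ∈ S.erase j, (1 - X (e j - e i)) ^ (a j)) *
      ((∏ i ∈ S.erase j, (1 - X (e i - e j)) ^ (a i)) * D (S.erase j) a) := by
  classical
  set P := (S ×ˢ S).filter (fun p : Fin n × Fin n => p.1 ≠ p.2) with hP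
  set F := fun p : Fin n × Fin n => (1 - X (e p.1 - e p.2)) ^ (a p.1) with hF
  have h1 : ∏ p ∈ P.filter (fun p => p.1 = j), F p
      = ∏ i ∈ S.erase j, (1 - X (e j - e i)) ^ (a j) := by
    apply Finset.prod_bij (fun p _ => p.2)
    · intro p hp
      simp only [hP, Finset.mem_filter, Finset.mem_product] at hp
      exact Finset.mem_erase.mpr ⟨fun h => hp.1.2 (by rw [hp.2, h]), hp.1.1.2⟩
    · intro p hp q hq hpq
      simp only [hP, Finset.mem_filter, Finset.mem_product] at hp hq
      exact Prod.ext (hp.2.trans hq.2.symm) hpq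
    · intro i hi
      rw [Finset.mem_erase] at hi
      refine ⟨(j, i), ?_, rfl⟩
      simp only [hP, Finset.mem_filter, Finset.mem_product]
      tauto
    · intro p hp
      simp only [hP, hF, Finset.mem_filter, Finset.mem_product] at hp ⊢
      rw [hp.2]
  have h2 : ∏ p ∈ (P.filter (fun p => ¬ p.1 = j)).filter (fun p => p.2 = j), F p
      = ∏ i ∈ S.erase j, (1 - X (e i - e j)) ^ (a i) := by
    apply Finset.prod_bij (fun p _ => p.1)
    · intro p hp
      simp only [hP, Finset.mem_filter, Finset.mem_product] at hp
      exact Finset.mem_erase.mpr ⟨hp.1.2, hp.1.1.1.1⟩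
    · intro p hp q hq hpq
      simp only [hP, Finset.mem_filter, Finset.mem_product] at hp hq
      exact Prod.ext hpq (hp.2.trans hq.2.symm)
    · intro i hi
      rw [Finset.mem_erase] at hi
      refine ⟨(i, j), ?_, rfl⟩
      simp only [hP, Finset.mem_filter, Finset.mem_product]
      tauto
    · intro p hp
      simp only [hP, hF, Finset.mem_filter, Finset.mem_product] at hp ⊢
      rw [hp.2]
  have h3 : ∏ p ∈ (P.filter (fun p => ¬ p.1 = j)).filter (fun p => ¬ p.2 = j), F p
      = D (S.erase j) a := by
    have hset : (P.filter (fun p => ¬ p.1 = j)).filter (fun p => ¬ p.2 = j)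
        = ((S.erase j) ×ˢ (S.erase j)).filter (fun p => p.1 ≠ p.2) := by
      ext p
      simp only [hP, Finset.mem_filter, Finset.mem_product, Finset.mem_erase]
      tauto
    rw [hset]; rfl
  calc D S a = ∏ p ∈ P, F p := rfl
    _ = (∏ p ∈ P.filter (fun p => p.1 = j), F p)
        * ∏ p ∈ P.filter (fun p => ¬ p.1 = j), F p :=
      (Finset.prod_filter_mul_prod_filter_not P _ F).symm
    _ = (∏ p ∈ P.filter (fun p => p.1 = j), F p)
        * ((∏ p ∈ (P.filter (fun p => ¬ p.1 = j)).filter (fun p => p.2 = j), F p)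
          * ∏ p ∈ (P.filter (fun p => ¬ p.1 = j)).filter (fun p => ¬ p.2 = j), F p) := by
      congr 1
      exact (Finset.prod_filter_mul_prod_filter_not _ _ F).symm
    _ = _ := by rw [h1, h2, h3]

-- boundary lemma
lemma CT_boundary (S : Finset (Fin n)) (a : Fin n → ℕ) {j : Fin n}
    (hj : j ∈ S) (ha : a j = 0) :
    (D S a).coeff (0 : Fin n → ℤ) = (D (S.erase j) a).coeff (0 : Fin n → ℤ) := by
  classical
  rw [D_split S a hj, ha]
  simp only [pow_zero, Finset.prod_const_one, one_mul]
  obtain ⟨C, hBC, hC⟩ :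
      Good j (∏ i ∈ S.erase j, (1 - X (e i - e j)) ^ (a i)) := by
    apply good_prod
    intro i hi
    exact good_pow (good_factor (Finset.mem_erase.1 hi).1) _
  rw [hBC, add_mul, one_mul, AddMonoidAlgebra.coeff_add, Finsupp.add_apply]
  have hCA : (C * D (S.erase j) a).coeff (0 : Fin n → ℤ) = 0 := by
    by_contra h
    have h0 : (0 : Fin n → ℤ) ∈ (C * D (S.erase j) a).coeff.support :=
      Finsupp.mem_support_iff.mpr h
    obtain ⟨u, hu, w, hw, huw⟩ :=
      Finset.mem_add.1 (AddMonoidAlgebra.support_coeff_mul_subset _ _ h0)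
    have h1 : u j < 0 := hC u hu
    have h2 : w j = 0 := zeroAt_D (S.erase j) (Finset.notMem_erase j S) a w hw
    have h3 : u j + w j = 0 := congrFun huw j
    omega
  rw [hCA, add_zero]

lemma D_succ (S : Finset (Fin n)) (a : Fin n → ℕ) {j : Fin n}
    (hj : j ∈ S) (ha : 1 ≤ a j) :
    D S a = D S (Function.update a j (a j - 1)) *
      ∏ i ∈ S.erase j, (1 - X (e j - e i)) := by
  classical
  rw [D_split S a hj, D_split S (Function.update a j (a j - 1)) hj]
  have h1 : ∀ i ∈ S.erase j,
      (1 - X (e i - e j)) ^ (Function.update a j (a j - 1) i) =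
      (1 - X (e i - e j)) ^ (a i) := by
    intro i hi
    rw [Function.update_of_ne (Finset.mem_erase.1 hi).1]
  have h2 : D (S.erase j) (Function.update a j (a j - 1)) = D (S.erase j) a := by
    unfold D
    apply Finset.prod_congr rfl
    intro p hp
    simp only [Finset.mem_filter, Finset.mem_product, Finset.mem_erase] at hp
    rw [Function.update_of_ne hp.1.1.1]
  rw [Finset.prod_congr rfl h1, h2, Function.update_self]
  have h3 : ∏ i ∈ S.erase j, (1 - X (e j - e i)) ^ (a j)
      = (∏ i ∈ S.erase j, (1 - X (e j - e i)) ^ (a j - 1)) *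
        ∏ i ∈ S.erase j, (1 - X (e j - e i)) := by
    rw [← Finset.prod_mul_distrib]
    apply Finset.prod_congr rfl
    intro i _
    rw [← pow_succ, Nat.sub_add_cancel ha]
  rw [h3]; ring

-- cut here
instance : IsDomain (R n) := NoZeroDivisors.to_isDomain _

/-- The fraction field. -/
abbrev K (n : ℕ) := FractionRing (R n)

noncomputable def φ : R n →+* K n := algebraMap (R n) (K n)

lemma φ_inj : Function.Injective (φ (n := n)) := IsFractionRing.injective (R n) (K n)

noncomputable def y (i : Fin n) : K n := φ (X (e i))

lemma X_inj : Function.Injective (X (n := n)) := by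
  intro u v h
  exact AddMonoidAlgebra.single_left_injective (one_ne_zero) h

lemma y_inj : Function.Injective (y (n := n)) := by
  intro i j h
  exact e_inj (X_inj (φ_inj h))

lemma y_ne_zero (i : Fin n) : y i ≠ 0 := by
  intro h
  have h' : φ (X (e i)) = φ 0 := by rw [map_zero]; exact h
  exact X_ne_zero (e i) (φ_inj h')

lemma y_sub_ne_zero {i j : Fin n} (h : i ≠ j) : y i - y j ≠ 0 :=
  sub_ne_zero.mpr (fun hh => h (y_inj hh))

lemma key_factor (i j : Fin n) : y i * φ (1 - X (e j - e i)) = y i - y j := by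
  have hR : X (e i) * (1 - X (e j - e i)) = X (e i) - X (e j) := by
    rw [mul_sub, mul_one, X_mul]
    congr 1
    congr 1
    abel
  have h := congrArg (φ (n := n)) hR
  rw [map_mul, map_sub, map_sub, map_one] at h
  rw [map_sub, map_one]
  exact h

lemma lagrange_sum (S : Finset (Fin n)) (hS : S.Nonempty) :
    ∑ j ∈ S, ∏ i ∈ S.erase j, (y i / (y i - y j)) = (1 : K n) := by
  classical
  have hv : Set.InjOn (y (n := n)) S := Function.Injective.injOn y_inj
  have hdeg : (1 : Polynomial (K n)).degree < S.card := by
    rw [Polynomial.degree_one]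
    exact_mod_cast Finset.card_pos.mpr hS
  have h := Lagrange.eq_interpolate (f := (1 : Polynomial (K n))) hv hdeg
  have h0 := congrArg (Polynomial.eval (0 : K n)) h
  rw [Polynomial.eval_one, Lagrange.interpolate_apply, Polynomial.eval_finset_sum] at h0
  rw [h0]
  apply Finset.sum_congr rfl
  intro j hj
  rw [Polynomial.eval_mul, Polynomial.eval_C, Polynomial.eval_one, one_mul,
    Lagrange.basis, Polynomial.eval_prod]
  apply Finset.prod_congr rfl
  intro i hi
  have h1 : y i - y j ≠ 0 := y_sub_ne_zero (Finset.mem_erase.1 hi).1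
  have h2 : y j - y i ≠ 0 := y_sub_ne_zero (Ne.symm (Finset.mem_erase.1 hi).1)
  rw [Lagrange.basisDivisor, Polynomial.eval_mul, Polynomial.eval_C,
    Polynomial.eval_sub, Polynomial.eval_X, Polynomial.eval_C]
  field_simp
  ring

lemma D_recursion (S : Finset (Fin n)) (hS : S.Nonempty) (a : Fin n → ℕ)
    (ha : ∀ i ∈ S, 1 ≤ a i) :
    D S a = ∑ j ∈ S, D S (Function.update a j (a j - 1)) := by
  classical
  apply φ_inj
  rw [map_sum]
  have key : ∀ j ∈ S, φ (D S (Function.update a j (a j - 1)))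
      = φ (D S a) * ∏ i ∈ S.erase j, (y i / (y i - y j)) := by
    intro j hj
    have h1 := congrArg (φ (n := n)) (D_succ S a hj (ha j hj))
    rw [map_mul, map_prod] at h1
    have hprod : (∏ i ∈ S.erase j, φ (1 - X (e j - e i))) *
        (∏ i ∈ S.erase j, y i) = ∏ i ∈ S.erase j, (y i - y j) := by
      rw [← Finset.prod_mul_distrib]
      apply Finset.prod_congr rfl
      intro i _
      rw [mul_comm]
      exact key_factor i j
    have hy : (∏ i ∈ S.erase j, y i) ≠ 0 :=
      Finset.prod_ne_zero_iff.mpr (fun i _ => y_ne_zero i)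
    have hd : (∏ i ∈ S.erase j, (y i - y j)) ≠ 0 :=
      Finset.prod_ne_zero_iff.mpr (fun i hi => y_sub_ne_zero (Finset.mem_erase.1 hi).1)
    rw [Finset.prod_div_distrib, ← mul_div_assoc, eq_div_iff hd, h1, mul_assoc, hprod]
  rw [Finset.sum_congr rfl key, ← Finset.mul_sum, lagrange_sum S hS, mul_one]

-- cut here
lemma sum_update_erase (S : Finset (Fin n)) (a : Fin n → ℕ) {j : Fin n} (hj : j ∈ S) :
    ∑ i ∈ S, Function.update a j (a j - 1) i = (a j - 1) + ∑ i ∈ S.erase j, a i := by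
  classical
  rw [← Finset.add_sum_erase S _ hj, Function.update_self]
  congr 1
  apply Finset.sum_congr rfl
  intro i hi
  rw [Function.update_of_ne (Finset.mem_erase.1 hi).1]

lemma prod_fact_update (S : Finset (Fin n)) (a : Fin n → ℕ) {j : Fin n} (hj : j ∈ S)
    (ha : 1 ≤ a j) :
    (∏ i ∈ S, (a i).factorial) =
      a j * ∏ i ∈ S, (Function.update a j (a j - 1) i).factorial := by
  classical
  rw [← Finset.mul_prod_erase S (fun i => (a i).factorial) hj,
    ← Finset.mul_prod_erase S (fun i => (Function.update a j (a j - 1) i).factorial) hj,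
    Function.update_self, ← mul_assoc, Nat.mul_factorial_pred (Nat.one_le_iff_ne_zero.mp ha)]
  congr 1
  apply Finset.prod_congr rfl
  intro i hi
  rw [Function.update_of_ne (Finset.mem_erase.1 hi).1]

lemma mult_rec (S : Finset (Fin n)) (hS : S.Nonempty) (a : Fin n → ℕ)
    (ha : ∀ i ∈ S, 1 ≤ a i) :
    ∑ j ∈ S, (((∑ i ∈ S, Function.update a j (a j - 1) i).factorial : ℚ) /
        ∏ i ∈ S, ((Function.update a j (a j - 1) i).factorial : ℚ))
      = ((∑ i ∈ S, a i).factorial : ℚ) / ∏ i ∈ S, ((a i).factorial : ℚ) := by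
  classical
  set N := ∑ i ∈ S, a i with hN
  obtain ⟨j0, hj0⟩ := hS
  have hN1 : 1 ≤ N := le_trans (ha j0 hj0) (Finset.single_le_sum (fun i _ => Nat.zero_le _) hj0)
  have hterm : ∀ j ∈ S, (((∑ i ∈ S, Function.update a j (a j - 1) i).factorial : ℚ) /
      ∏ i ∈ S, ((Function.update a j (a j - 1) i).factorial : ℚ))
      = (a j : ℚ) * ((N - 1).factorial : ℚ) / ∏ i ∈ S, ((a i).factorial : ℚ) := by
    intro j hj
    have hsum : ∑ i ∈ S, Function.update a j (a j - 1) i = N - 1 := by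
      rw [sum_update_erase S a hj]
      have h2 : N = a j + ∑ i ∈ S.erase j, a i := (Finset.add_sum_erase S a hj).symm
      have := ha j hj
      omega
    have hprod := prod_fact_update S a hj (ha j hj)
    rw [hsum]
    have hP1 : (∏ i ∈ S, ((Function.update a j (a j - 1) i).factorial : ℚ)) ≠ 0 := by
      rw [← Nat.cast_prod, Nat.cast_ne_zero]
      exact Nat.pos_iff_ne_zero.mp (Finset.prod_pos (fun i _ => Nat.factorial_pos _))
    have hP2 : (∏ i ∈ S, ((a i).factorial : ℚ)) ≠ 0 := by
      rw [← Nat.cast_prod, Nat.cast_ne_zero]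
      exact Nat.pos_iff_ne_zero.mp (Finset.prod_pos (fun i _ => Nat.factorial_pos _))
    rw [div_eq_div_iff hP1 hP2]
    have hprodQ : (∏ i ∈ S, ((a i).factorial : ℚ))
        = (a j : ℚ) * ∏ i ∈ S, ((Function.update a j (a j - 1) i).factorial : ℚ) := by
      rw [← Nat.cast_prod, ← Nat.cast_prod, ← Nat.cast_mul]
      exact_mod_cast congrArg (Nat.cast (R := ℚ)) hprod
    rw [hprodQ]
    ring
  rw [Finset.sum_congr rfl hterm, ← Finset.sum_div, ← Finset.sum_mul]
  have : (∑ j ∈ S, (a j : ℚ)) = (N : ℚ) := by rw [← Nat.cast_sum]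
  rw [this]
  congr 1
  rw [← Nat.cast_mul]
  exact_mod_cast Nat.mul_factorial_pred (Nat.one_le_iff_ne_zero.mp hN1)

theorem CT_D (m : ℕ) : ∀ (S : Finset (Fin n)) (a : Fin n → ℕ),
    (∑ i ∈ S, a i) + S.card = m →
    ((D S a).coeff (0 : Fin n → ℤ) : ℚ)
      = ((∑ i ∈ S, a i).factorial : ℚ) / ∏ i ∈ S, ((a i).factorial : ℚ) := by
  classical
  induction m using Nat.strong_induction_on with
  | _ m IH =>
  intro S a hm
  by_cases hS : S = ∅
  · subst hS
    simp [D, AddMonoidAlgebra.one_def]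
  · have hSne : S.Nonempty := Finset.nonempty_iff_ne_empty.mpr hS
    by_cases hall : ∀ i ∈ S, 1 ≤ a i
    · -- all exponents positive: use the recursion
      have hNpos : 1 ≤ ∑ i ∈ S, a i := by
        obtain ⟨j0, hj0⟩ := hSne
        exact le_trans (hall j0 hj0)
          (Finset.single_le_sum (fun i _ => Nat.zero_le _) hj0)
      rw [D_recursion S hSne a hall, AddMonoidAlgebra.coeff_sum, Finset.sum_apply']
      have hterm : ∀ j ∈ S, ((D S (Function.update a j (a j - 1))).coeff (0 : Fin n → ℤ) : ℚ)
          = ((∑ i ∈ S, Function.update a j (a j - 1) i).factorial : ℚ) /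
            ∏ i ∈ S, ((Function.update a j (a j - 1) i).factorial : ℚ) := by
        intro j hj
        apply IH ((∑ i ∈ S, Function.update a j (a j - 1) i) + S.card) _ S _ rfl
        have hsum : ∑ i ∈ S, Function.update a j (a j - 1) i = (∑ i ∈ S, a i) - 1 := by
          rw [sum_update_erase S a hj]
          have h2 : ∑ i ∈ S, a i = a j + ∑ i ∈ S.erase j, a i :=
            (Finset.add_sum_erase S a hj).symm
          have := hall j hj
          omega
        omega
      rw [Finset.sum_congr rfl hterm]
      exact mult_rec S hSne a hall
    · -- some exponent is zero: use the boundary reduction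
      push_neg at hall
      obtain ⟨j, hj, haj⟩ := hall
      have haj0 : a j = 0 := by omega
      rw [CT_boundary S a hj haj0]
      have hsum : ∑ i ∈ S.erase j, a i = ∑ i ∈ S, a i :=
        Finset.sum_erase S haj0
      have hprod : ∏ i ∈ S.erase j, ((a i).factorial : ℚ)
          = ∏ i ∈ S, ((a i).factorial : ℚ) :=
        Finset.prod_erase S (by rw [haj0]; norm_num)
      rw [← hsum, ← hprod]
      apply IH ((∑ i ∈ S.erase j, a i) + (S.erase j).card) _ (S.erase j) a rfl
      have hcard : (S.erase j).card < S.card := Finset.card_erase_lt_of_mem hj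
      omega

-- cut here
lemma D_univ_eq (k : ℕ) :
    (∏ p ∈ Finset.univ.filter (fun p : Fin n × Fin n => p.1 < p.2),
        (1 - AddMonoidAlgebra.single ((Pi.single p.1 1 - Pi.single p.2 1 : Fin n → ℤ)) (1 : ℚ)) ^ k *
        (1 - AddMonoidAlgebra.single ((Pi.single p.2 1 - Pi.single p.1 1 : Fin n → ℤ)) (1 : ℚ)) ^ k :
      AddMonoidAlgebra ℚ (Fin n → ℤ)) = D Finset.univ (fun _ => k) := by
  classical
  unfold D
  rw [Finset.univ_product_univ]
  have hT : (Finset.univ : Finset (Fin n × Fin n)) = Finset.univ := rfl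
  have hsplit : (Finset.univ : Finset (Fin n × Fin n)).filter (fun p => p.1 ≠ p.2)
      = (Finset.univ : Finset (Fin n × Fin n)).filter (fun p => p.1 < p.2) ∪ (Finset.univ : Finset (Fin n × Fin n)).filter (fun p => p.2 < p.1) := by
    ext p
    simp only [Finset.mem_union, Finset.mem_filter, Finset.mem_univ, true_and]
    constructor
    · intro h; exact lt_or_gt_of_ne h
    · rintro (h | h)
      · exact ne_of_lt h
      · exact (ne_of_lt h).symm
  have hdisj : Disjoint ((Finset.univ : Finset (Fin n × Fin n)).filter (fun p : Fin n × Fin n => p.1 < p.2))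
      ((Finset.univ : Finset (Fin n × Fin n)).filter (fun p => p.2 < p.1)) := by
    rw [Finset.disjoint_left]
    intro p hp hq
    simp only [Finset.mem_filter, Finset.mem_univ, true_and] at hp hq
    exact absurd hq (not_lt_of_gt hp)
  rw [hsplit, Finset.prod_union hdisj]
  have hswap : ∏ p ∈ (Finset.univ : Finset (Fin n × Fin n)).filter (fun p : Fin n × Fin n => p.2 < p.1),
      (1 - X (e p.1 - e p.2)) ^ k
      = ∏ p ∈ (Finset.univ : Finset (Fin n × Fin n)).filter (fun p : Fin n × Fin n => p.1 < p.2),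
        (1 - X (e p.2 - e p.1)) ^ k := by
    apply Finset.prod_bij (fun p _ => Prod.swap p)
    · intro p hp
      simp only [Finset.mem_filter, Finset.mem_univ, true_and] at hp ⊢
      exact hp
    · intro p _ q _ h
      exact Prod.swap_injective h
    · intro p hp
      refine ⟨Prod.swap p, ?_, (Prod.swap_swap p).symm⟩
      simp only [Finset.mem_filter, Finset.mem_univ, true_and] at hp ⊢
      exact hp
    · intro p _; rfl
  rw [hswap, ← Finset.prod_mul_distrib]
  apply Finset.prod_congr rfl
  intro p _
  rfl

end DysonAux

/-- **Dyson's constant term identity** (the Macdonald constant term conjecture for the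
root system of type `A_{n-1}`).  We work in the group algebra `ℚ[ℤ^n]`, realized as
`AddMonoidAlgebra ℚ (Fin n → ℤ)`, whose element `single v 1` is the Laurent monomial
`x^v = x₁^{v 1} ⋯ xₙ^{v n}`; the constant term of a Laurent polynomial is its
coefficient at the lattice point `0`.  The claim: for every positive integer `n` and
every `k : ℕ`, the constant term of
`∏_{1 ≤ i < j ≤ n} (1 - xᵢ xⱼ⁻¹)^k (1 - xⱼ xᵢ⁻¹)^k` equals `(nk)! / (k!)^n`. -/
theorem dyson_constant_term_identity (n : ℕ) (hn : 0 < n) (k : ℕ) :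
    ((∏ p ∈ Finset.univ.filter (fun p : Fin n × Fin n => p.1 < p.2),
        (1 - AddMonoidAlgebra.single ((Pi.single p.1 1 - Pi.single p.2 1 : Fin n → ℤ)) (1 : ℚ)) ^ k *
        (1 - AddMonoidAlgebra.single ((Pi.single p.2 1 - Pi.single p.1 1 : Fin n → ℤ)) (1 : ℚ)) ^ k :
      AddMonoidAlgebra ℚ (Fin n → ℤ)).coeff (0 : Fin n → ℤ) : ℚ) =
      (Nat.factorial (n * k) : ℚ) / (Nat.factorial k : ℚ) ^ n := by
  classical
  rw [DysonAux.D_univ_eq k]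
  have hsum : ∑ _i ∈ (Finset.univ : Finset (Fin n)), k = n * k := by
    rw [Finset.sum_const, Finset.card_univ, Fintype.card_fin, smul_eq_mul]
  have h := DysonAux.CT_D ((∑ _i ∈ (Finset.univ : Finset (Fin n)), k)
      + (Finset.univ : Finset (Fin n)).card) Finset.univ (fun _ => k) rfl
  rw [h, hsum, Finset.prod_const, Finset.card_univ, Fintype.card_fin]
end
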